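/- arXiv:1311.5691 — 9 statements merged into one kernel-verified Lean document; each statement's English description precedes it below -/
import Mathlib

section
/- Let m, M ∈ ℝ^n be vectors arranged in nonincreasing order with 0 ≤ m_i ≤ M_i for all i, let a be a real number with Σ_{i=1}^n m_i ≤ a ≤ Σ_{i=1}^n M_i, and let S_a = {x ∈ ℝ^n : x_1 ≥ x_2 ≥ ⋯ ≥ x_n ≥ 0, Σ_{i=1}^n x_i = a, and m_i ≤ x_i ≤ M_i for all i}. Let k ≥ 0 be the smallest integer such that Σ_{i=1}^k M_i + Σ_{i=k+1}^n m_i ≤ a < Σ_{i=1}^{k+1} M_i + Σ_{i=k+2}^n m_i, and set θ = a − Σ_{i=1}^k M_i − Σ_{i=k+2}^n m_i. Then the vector x* = (M_1, …, M_k, θ, m_{k+2}, …, m_n) belongs to S_a and majorizes every x ∈ S_a, i.e. Σ_{i=1}^j x_i ≤ Σ_{i=1}^j x*_i for all j = 1, …, n−1 and Σ_{i=1}^n x_i = Σ_{i=1}^n x*_i. -/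
open Finset

/-- Theorem 1 (maximal element of `S_a`): given nonincreasing vectors `m ≤ M`
with nonnegative entries and `∑ m ≤ a ≤ ∑ M`, if `k` is the smallest integer with
`∑_{i≤k} M_i + ∑_{i>k} m_i ≤ a < ∑_{i≤k+1} M_i + ∑_{i>k+1} m_i` and
`θ = a - ∑_{i≤k} M_i - ∑_{i>k+1} m_i`, then
`x* = (M_1, …, M_k, θ, m_{k+2}, …, m_n)` belongs to `S_a` and majorizes every
element of `S_a`.  (Everything is 0-indexed.) -/
theorem maximal_element_of_Sa (n : ℕ) (hn : 0 < n) (m M : ℕ → ℝ)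
    (hm_dec : ∀ i j, i ≤ j → j < n → m j ≤ m i)
    (hM_dec : ∀ i j, i ≤ j → j < n → M j ≤ M i)
    (hm_nonneg : ∀ i, i < n → 0 ≤ m i)
    (hmM : ∀ i, i < n → m i ≤ M i)
    (a : ℝ)
    (ha₁ : ∑ i ∈ range n, m i ≤ a) (ha₂ : a ≤ ∑ i ∈ range n, M i)
    (k : ℕ)
    (hk : ∑ i ∈ range k, M i + ∑ i ∈ Ico k n, m i ≤ a ∧
          a < ∑ i ∈ range (k + 1), M i + ∑ i ∈ Ico (k + 1) n, m i)
    (hk_min : ∀ j, j < k →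
        ¬ (∑ i ∈ range j, M i + ∑ i ∈ Ico j n, m i ≤ a ∧
           a < ∑ i ∈ range (j + 1), M i + ∑ i ∈ Ico (j + 1) n, m i))
    (θ : ℝ) (hθ : θ = a - ∑ i ∈ range k, M i - ∑ i ∈ Ico (k + 1) n, m i)
    (xstar : ℕ → ℝ)
    (hxstar : ∀ i, xstar i = if i < k then M i else if i = k then θ else m i) :
    ((∀ i j, i ≤ j → j < n → xstar j ≤ xstar i) ∧ (∀ i, i < n → 0 ≤ xstar i) ∧
        ∑ i ∈ range n, xstar i = a ∧
        (∀ i, i < n → m i ≤ xstar i ∧ xstar i ≤ M i)) ∧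
      ∀ x : ℕ → ℝ,
        ((∀ i j, i ≤ j → j < n → x j ≤ x i) ∧ (∀ i, i < n → 0 ≤ x i) ∧
            ∑ i ∈ range n, x i = a ∧
            (∀ i, i < n → m i ≤ x i ∧ x i ≤ M i)) →
          (∀ j, 1 ≤ j → j ≤ n - 1 →
              ∑ i ∈ range j, x i ≤ ∑ i ∈ range j, xstar i) ∧
            ∑ i ∈ range n, x i = ∑ i ∈ range n, xstar i := by

  classical
  by_cases hkn : k < n
  · -- main case: k < n
    have hsplit : ∑ i ∈ Ico k n, m i = m k + ∑ i ∈ Ico (k + 1) n, m i :=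
      Finset.sum_eq_sum_Ico_succ_bot hkn m
    have hθm : m k ≤ θ := by rw [hθ]; linarith [hk.1, hsplit]
    have hθM : θ < M k := by
      have h2 := hk.2
      rw [Finset.sum_range_succ] at h2
      rw [hθ]; linarith
    have hsum : ∑ i ∈ range n, xstar i = a := by
      have h1 : ∑ i ∈ range (k + 1), xstar i + ∑ i ∈ Ico (k + 1) n, xstar i
          = ∑ i ∈ range n, xstar i := Finset.sum_range_add_sum_Ico _ hkn
      have h2 : ∑ i ∈ range (k + 1), xstar i = ∑ i ∈ range k, M i + θ := by
        rw [Finset.sum_range_succ]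
        congr 1
        · refine Finset.sum_congr rfl fun i hi => ?_
          rw [Finset.mem_range] at hi
          rw [hxstar, if_pos hi]
        · rw [hxstar, if_neg (lt_irrefl k), if_pos rfl]
      have h3 : ∑ i ∈ Ico (k + 1) n, xstar i = ∑ i ∈ Ico (k + 1) n, m i := by
        refine Finset.sum_congr rfl fun i hi => ?_
        rw [Finset.mem_Ico] at hi
        rw [hxstar, if_neg (by omega), if_neg (by omega)]
      rw [← h1, h2, h3, hθ]; ring
    have hdec : ∀ i j, i ≤ j → j < n → xstar j ≤ xstar i := by
      intro i j hij hj
      have hMk : ∀ t, t ≤ k → M k ≤ M t := fun t ht => hM_dec t k ht hkn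
      have hmk : ∀ t, k ≤ t → t < n → m t ≤ m k := fun t ht h => hm_dec k t ht h
      rw [hxstar, hxstar]
      by_cases h1 : j < k
      · rw [if_pos h1, if_pos (lt_of_le_of_lt hij h1)]
        exact hM_dec i j hij hj
      by_cases h2 : j = k
      · rw [if_neg h1, if_pos h2]
        by_cases h3 : i < k
        · rw [if_pos h3]
          exact le_trans (le_of_lt hθM) (hMk i (le_of_lt h3))
        · rw [if_neg h3, if_pos (by omega)]
      · rw [if_neg h1, if_neg h2]
        have hjk : k < j := by omega
        by_cases h3 : i < k
        · rw [if_pos h3]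
          calc m j ≤ m k := hmk j (le_of_lt hjk) hj
            _ ≤ θ := hθm
            _ ≤ M k := le_of_lt hθM
            _ ≤ M i := hMk i (le_of_lt h3)
        by_cases h4 : i = k
        · rw [if_neg h3, if_pos h4]
          exact le_trans (hmk j (le_of_lt hjk) hj) hθm
        · rw [if_neg h3, if_neg h4]
          exact hm_dec i j hij hj
    have hbounds : ∀ i, i < n → m i ≤ xstar i ∧ xstar i ≤ M i := by
      intro i hi
      rw [hxstar]
      by_cases h1 : i < k
      · rw [if_pos h1]; exact ⟨hmM i hi, le_refl _⟩
      by_cases h2 : i = k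
      · rw [if_neg h1, if_pos h2, h2]
        exact ⟨hθm, le_of_lt hθM⟩
      · rw [if_neg h1, if_neg h2]
        exact ⟨le_refl _, hmM i hi⟩
    have hnn : ∀ i, i < n → 0 ≤ xstar i := fun i hi =>
      le_trans (hm_nonneg i hi) (hbounds i hi).1
    refine ⟨⟨hdec, hnn, hsum, hbounds⟩, ?_⟩
    rintro x ⟨hxdec, hxnn, hxsum, hxb⟩
    constructor
    · intro j hj1 hj2
      have hjn : j ≤ n := by omega
      by_cases hjk : j ≤ k
      · have h1 : ∑ i ∈ range j, xstar i = ∑ i ∈ range j, M i := by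
          refine Finset.sum_congr rfl fun i hi => ?_
          rw [Finset.mem_range] at hi
          rw [hxstar, if_pos (lt_of_lt_of_le hi hjk)]
        rw [h1]
        refine Finset.sum_le_sum fun i hi => ?_
        rw [Finset.mem_range] at hi
        exact (hxb i (by omega)).2
      · have e1 : ∑ i ∈ range j, x i + ∑ i ∈ Ico j n, x i = a := by
          rw [Finset.sum_range_add_sum_Ico _ hjn, hxsum]
        have e2 : ∑ i ∈ range j, xstar i + ∑ i ∈ Ico j n, xstar i = a := by
          rw [Finset.sum_range_add_sum_Ico _ hjn, hsum]
        have e3 : ∑ i ∈ Ico j n, xstar i = ∑ i ∈ Ico j n, m i := by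
          refine Finset.sum_congr rfl fun i hi => ?_
          rw [Finset.mem_Ico] at hi
          rw [hxstar, if_neg (by omega), if_neg (by omega)]
        have e4 : ∑ i ∈ Ico j n, m i ≤ ∑ i ∈ Ico j n, x i := by
          refine Finset.sum_le_sum fun i hi => ?_
          rw [Finset.mem_Ico] at hi
          exact (hxb i hi.2).1
        linarith
    · rw [hxsum, hsum]
  · push_neg at hkn
    have hxM : ∀ i, i < n → xstar i = M i := by
      intro i hi
      rw [hxstar, if_pos (lt_of_lt_of_le hi hkn)]
    have hae : ∑ i ∈ range n, M i ≤ a := by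
      by_contra hc
      push_neg at hc
      have hwit : a < ∑ i ∈ range (n - 1 + 1), M i + ∑ i ∈ Ico (n - 1 + 1) n, m i := by
        have hn1 : n - 1 + 1 = n := by omega
        rw [hn1]
        simpa using hc
      have hP : ∃ j, a < ∑ i ∈ range (j + 1), M i + ∑ i ∈ Ico (j + 1) n, m i :=
        ⟨n - 1, hwit⟩
      have hj0n : Nat.find hP ≤ n - 1 := Nat.find_min' hP hwit
      have hlow : ∑ i ∈ range (Nat.find hP), M i + ∑ i ∈ Ico (Nat.find hP) n, m i ≤ a := by
        rcases Nat.eq_zero_or_pos (Nat.find hP) with h0 | h0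
        · rw [h0]; simpa using ha₁
        · have hmin := Nat.find_min hP (show Nat.find hP - 1 < Nat.find hP by omega)
          push_neg at hmin
          have heq : Nat.find hP - 1 + 1 = Nat.find hP := by omega
          rwa [heq] at hmin
      exact hk_min (Nat.find hP) (by omega) ⟨hlow, Nat.find_spec hP⟩
    have ha' : a = ∑ i ∈ range n, M i := le_antisymm ha₂ hae
    have hsum : ∑ i ∈ range n, xstar i = a := by
      rw [ha']
      exact Finset.sum_congr rfl fun i hi => hxM i (Finset.mem_range.mp hi)
    refine ⟨⟨?_, ?_, hsum, ?_⟩, ?_⟩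
    · intro i j hij hj
      rw [hxM i (by omega), hxM j hj]
      exact hM_dec i j hij hj
    · intro i hi
      rw [hxM i hi]
      exact le_trans (hm_nonneg i hi) (hmM i hi)
    · intro i hi
      rw [hxM i hi]
      exact ⟨hmM i hi, le_refl _⟩
    · rintro x ⟨hxdec, hxnn, hxsum, hxb⟩
      constructor
      · intro j hj1 hj2
        have h1 : ∑ i ∈ range j, xstar i = ∑ i ∈ range j, M i := by
          refine Finset.sum_congr rfl fun i hi => ?_
          rw [Finset.mem_range] at hi
          exact hxM i (by omega)
        rw [h1]
        refine Finset.sum_le_sum fun i hi => ?_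
        rw [Finset.mem_range] at hi
        exact (hxb i (by omega)).2
      · rw [hxsum, hsum]
end

section
/- Let m, M ∈ ℝ^n be vectors arranged in nonincreasing order with 0 ≤ m_i ≤ M_i for all i, let a be a real number with Σ_{i=1}^n m_i ≤ a ≤ Σ_{i=1}^n M_i, and let S_a = {x ∈ ℝ^n : x_1 ≥ x_2 ≥ ⋯ ≥ x_n ≥ 0, Σ_{i=1}^n x_i = a, and m_i ≤ x_i ≤ M_i for all i}. Let k ≥ 0 and d ≥ 0 be the smallest integers such that k + d < n and m_{k+1} ≤ ρ ≤ M_{n−d}, where ρ = (a − Σ_{i=1}^k m_i − Σ_{i=n−d+1}^n M_i)/(n − k − d). Then the vector x_* = (m_1, …, m_k, ρ, …, ρ, M_{n−d+1}, …, M_n) (with ρ repeated n−k−d times) belongs to S_a and is minorized by no element of S_a, i.e. x_* ⊴ x for every x ∈ S_a. -/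
open Finset

lemma avg_prefix_aux (x : ℕ → ℝ) (n k j N : ℕ)
    (hmono : ∀ i j, i ≤ j → j < n → x j ≤ x i)
    (hkj : k < j) (hjN : j ≤ N) (hNn : N ≤ n) :
    ((j : ℝ) - k) * ∑ i ∈ Ico k N, x i ≤ ((N : ℝ) - k) * ∑ i ∈ Ico k j, x i := by
  have hsplit : (∑ i ∈ Ico k j, x i) + ∑ i ∈ Ico j N, x i = ∑ i ∈ Ico k N, x i :=
    Finset.sum_Ico_consecutive _ (le_of_lt hkj) hjN
  have h1 : ((j:ℝ) - k) * x (j-1) ≤ ∑ i ∈ Ico k j, x i := by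
    have h := Finset.card_nsmul_le_sum (Ico k j) x (x (j-1)) ?_
    · rw [Nat.card_Ico, nsmul_eq_mul] at h
      have hc : ((j - k : ℕ) : ℝ) = (j:ℝ) - k := by
        push_cast [Nat.cast_sub (le_of_lt hkj)]; ring
      linarith [hc ▸ h]
    · intro i hi
      simp only [Finset.mem_Ico] at hi
      exact hmono i (j-1) (by omega) (by omega)
  have h2 : ∑ i ∈ Ico j N, x i ≤ ((N:ℝ) - j) * x (j-1) := by
    have h := Finset.sum_le_card_nsmul (Ico j N) x (x (j-1)) ?_
    · rw [Nat.card_Ico, nsmul_eq_mul] at h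
      have hc : ((N - j : ℕ) : ℝ) = (N:ℝ) - j := by
        push_cast [Nat.cast_sub hjN]; ring
      linarith [hc ▸ h]
    · intro i hi
      simp only [Finset.mem_Ico] at hi
      exact hmono (j-1) i (by omega) (by omega)
  have hNj : (0:ℝ) ≤ (N:ℝ) - j := sub_nonneg.2 (by exact_mod_cast hjN)
  have hjk : (0:ℝ) ≤ (j:ℝ) - k := sub_nonneg.2 (by exact_mod_cast (le_of_lt hkj))
  nlinarith [mul_le_mul_of_nonneg_left h1 hNj, mul_le_mul_of_nonneg_left h2 hjk]

set_option maxHeartbeats 2000000 in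
/-- Theorem 2 (minimal element of `S_a`): given nonincreasing vectors `m ≤ M`
with nonnegative entries and `∑ m ≤ a ≤ ∑ M`, if `(k, d)` is the smallest pair of
integers with `k + d < n` and `m_{k+1} ≤ ρ ≤ M_{n-d}` where
`ρ = (a - ∑_{i≤k} m_i - ∑_{i>n-d} M_i)/(n-k-d)`, then
`x_* = (m_1, …, m_k, ρ^{n-k-d}, M_{n-d+1}, …, M_n)` belongs to `S_a` and is
majorized by every element of `S_a`.  (Everything is 0-indexed.) -/
theorem minimal_element_of_Sa (n : ℕ) (hn : 0 < n) (m M : ℕ → ℝ)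
    (hm_dec : ∀ i j, i ≤ j → j < n → m j ≤ m i)
    (hM_dec : ∀ i j, i ≤ j → j < n → M j ≤ M i)
    (hm_nonneg : ∀ i, i < n → 0 ≤ m i)
    (hmM : ∀ i, i < n → m i ≤ M i)
    (a : ℝ)
    (ha₁ : ∑ i ∈ range n, m i ≤ a) (ha₂ : a ≤ ∑ i ∈ range n, M i)
    (k d : ℕ)
    (hkd : k + d < n)
    (ρ : ℝ)
    (hρ : ρ = (a - ∑ i ∈ range k, m i - ∑ i ∈ Ico (n - d) n, M i) /
        ((n : ℝ) - k - d))
    (hρ₁ : m k ≤ ρ) (hρ₂ : ρ ≤ M (n - d - 1))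
    (hkd_min : ∀ k' d' : ℕ,
        (k' + d' < n ∧
          m k' ≤ (a - ∑ i ∈ range k', m i - ∑ i ∈ Ico (n - d') n, M i) /
              ((n : ℝ) - k' - d') ∧
          (a - ∑ i ∈ range k', m i - ∑ i ∈ Ico (n - d') n, M i) /
              ((n : ℝ) - k' - d') ≤ M (n - d' - 1)) →
        k ≤ k' ∧ d ≤ d')
    (xstar : ℕ → ℝ)
    (hxstar : ∀ i, xstar i = if i < k then m i else if i < n - d then ρ else M i) :
    ((∀ i j, i ≤ j → j < n → xstar j ≤ xstar i) ∧ (∀ i, i < n → 0 ≤ xstar i) ∧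
        ∑ i ∈ range n, xstar i = a ∧
        (∀ i, i < n → m i ≤ xstar i ∧ xstar i ≤ M i)) ∧
      ∀ x : ℕ → ℝ,
        ((∀ i j, i ≤ j → j < n → x j ≤ x i) ∧ (∀ i, i < n → 0 ≤ x i) ∧
            ∑ i ∈ range n, x i = a ∧
            (∀ i, i < n → m i ≤ x i ∧ x i ≤ M i)) →
          (∀ j, 1 ≤ j → j ≤ n - 1 →
              ∑ i ∈ range j, xstar i ≤ ∑ i ∈ range j, x i) ∧
            ∑ i ∈ range n, xstar i = ∑ i ∈ range n, x i := by
  have hkN : k < n - d := by omega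
  have hNn : n - d ≤ n := Nat.sub_le _ _
  have hden : (0:ℝ) < (n:ℝ) - k - d := by
    have : (k:ℝ) + d < n := by exact_mod_cast hkd
    linarith
  have hcastN : ((n - d : ℕ) : ℝ) = (n:ℝ) - d := by
    push_cast [Nat.cast_sub (by omega : d ≤ n)]; ring
  have hρden : ρ * ((n:ℝ) - k - d) = a - ∑ i ∈ range k, m i - ∑ i ∈ Ico (n - d) n, M i := by
    rw [hρ]; field_simp
  -- ρ is below m (k-1) when k ≥ 1
  have hm_above : ∀ i, i < k → ρ ≤ m i := by
    intro i hik
    have hk1 : 1 ≤ k := by omega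
    have key : ρ ≤ m (k - 1) := by
      by_contra hcon
      push_neg at hcon
      have hsum : ∑ i ∈ range k, m i = (∑ i ∈ range (k-1), m i) + m (k-1) := by
        have hk : k = (k-1) + 1 := by omega
        rw [hk, Finset.sum_range_succ]
        simp
      have hden' : ((n:ℝ) - ↑(k-1) - d) = ((n:ℝ) - k - d) + 1 := by
        push_cast [Nat.cast_sub hk1]; ring
      set ρ' := (a - ∑ i ∈ range (k-1), m i - ∑ i ∈ Ico (n - d) n, M i) /
          ((n : ℝ) - ↑(k-1) - ↑d) with hρ'
      have e1 : ρ' * (((n:ℝ) - k - d) + 1)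
          = a - ∑ i ∈ range (k-1), m i - ∑ i ∈ Ico (n - d) n, M i := by
        rw [hρ', hden']
        exact div_mul_cancel₀ _ (by linarith)
      have hρ'val : ρ' * (((n:ℝ) - k - d) + 1) = ρ * ((n:ℝ) - k - d) + m (k-1) := by
        rw [e1]; linarith [hρden, hsum]
      have h1 : m (k-1) ≤ ρ' := by
        nlinarith [hρ'val, hden, mul_pos (sub_pos.2 hcon) hden]
      have h2 : ρ' ≤ M (n - d - 1) := by
        have : ρ' ≤ ρ := by nlinarith [hρ'val, hden, mul_pos (sub_pos.2 hcon) hden]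
        linarith
      have := (hkd_min (k-1) d ⟨by omega, by rw [← hρ']; exact h1,
        by rw [← hρ']; exact h2⟩).1
      omega
    calc ρ ≤ m (k-1) := key
    _ ≤ m i := hm_dec i (k-1) (by omega) (by omega)
  -- ρ is above M (n-d) when d ≥ 1
  have hM_below : ∀ i, n - d ≤ i → i < n → M i ≤ ρ := by
    intro i hNi hin
    have hd1 : 1 ≤ d := by omega
    have key : M (n - d) ≤ ρ := by
      by_contra hcon
      push_neg at hcon
      have hbot : ∑ i ∈ Ico (n - d) n, M i = M (n-d) + ∑ i ∈ Ico (n - d + 1) n, M i :=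
        Finset.sum_eq_sum_Ico_succ_bot (by omega) M
      have hnd' : n - (d - 1) = n - d + 1 := by omega
      have hden' : ((n:ℝ) - k - ↑(d-1)) = ((n:ℝ) - k - d) + 1 := by
        push_cast [Nat.cast_sub hd1]; ring
      set ρ' := (a - ∑ i ∈ range k, m i - ∑ i ∈ Ico (n - (d-1)) n, M i) /
          ((n : ℝ) - ↑k - ↑(d-1)) with hρ'
      have e1 : ρ' * (((n:ℝ) - k - d) + 1)
          = a - ∑ i ∈ range k, m i - ∑ i ∈ Ico (n - (d-1)) n, M i := by
        rw [hρ', hden']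
        exact div_mul_cancel₀ _ (by linarith)
      rw [hnd'] at e1
      have hρ'val : ρ' * (((n:ℝ) - k - d) + 1) = ρ * ((n:ℝ) - k - d) + M (n-d) := by
        rw [e1]; linarith [hρden, hbot]
      have h2 : ρ' ≤ M (n - d) := by
        nlinarith [hρ'val, hden, mul_pos (sub_pos.2 hcon) hden]
      have h1 : ρ ≤ ρ' := by
        nlinarith [hρ'val, hden, mul_pos (sub_pos.2 hcon) hden]
      have hMeq : n - (d-1) - 1 = n - d := by omega
      have := (hkd_min k (d-1) ⟨by omega, by rw [← hρ']; exact le_trans hρ₁ h1,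
        by rw [← hρ', hMeq]; exact h2⟩).2
      omega
    calc M i ≤ M (n - d) := hM_dec (n-d) i hNi hin
    _ ≤ ρ := key
  -- value lemmas for xstar
  have hveq1 : ∀ i, i < k → xstar i = m i := by
    intro i hi; rw [hxstar, if_pos hi]
  have hveq2 : ∀ i, k ≤ i → i < n - d → xstar i = ρ := by
    intro i h1 h2; rw [hxstar, if_neg (by omega), if_pos h2]
  have hveq3 : ∀ i, n - d ≤ i → xstar i = M i := by
    intro i h1; rw [hxstar, if_neg (by omega), if_neg (by omega)]
  -- sum of xstar
  have e3 : ∑ i ∈ Ico 0 k, xstar i = ∑ i ∈ range k, m i := by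
    rw [← Finset.range_eq_Ico]
    exact Finset.sum_congr rfl fun i hi => hveq1 i (Finset.mem_range.1 hi)
  have hsum_xstar : ∑ i ∈ range n, xstar i = a := by
    have e1 : (∑ i ∈ Ico 0 k, xstar i) + ∑ i ∈ Ico k (n-d), xstar i
        = ∑ i ∈ Ico 0 (n-d), xstar i :=
      Finset.sum_Ico_consecutive _ (by omega) (by omega)
    have e2 : (∑ i ∈ Ico 0 (n-d), xstar i) + ∑ i ∈ Ico (n-d) n, xstar i
        = ∑ i ∈ Ico 0 n, xstar i :=
      Finset.sum_Ico_consecutive _ (by omega) hNn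
    have e4 : ∑ i ∈ Ico k (n-d), xstar i = ((n-d-k:ℕ):ℝ) * ρ := by
      rw [Finset.sum_congr rfl fun i hi => hveq2 i (Finset.mem_Ico.1 hi).1 (Finset.mem_Ico.1 hi).2,
        Finset.sum_const, Nat.card_Ico, nsmul_eq_mul]
    have e5 : ∑ i ∈ Ico (n-d) n, xstar i = ∑ i ∈ Ico (n-d) n, M i :=
      Finset.sum_congr rfl fun i hi => hveq3 i (Finset.mem_Ico.1 hi).1
    have hc : ((n-d-k:ℕ):ℝ) = (n:ℝ) - k - d := by
      rw [Nat.cast_sub (le_of_lt hkN), hcastN]; ring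
    rw [Finset.range_eq_Ico, ← e2, ← e1, e3, e4, e5, hc]
    linarith [hρden]
  -- monotonicity
  have hadj : ∀ j, j + 1 < n → xstar (j+1) ≤ xstar j := by
    intro j hj
    by_cases h1 : j + 1 < k
    · rw [hveq1 (j+1) h1, hveq1 j (by omega)]
      exact hm_dec j (j+1) (by omega) (by omega)
    · by_cases h2 : j < k
      · rw [hveq2 (j+1) (by omega) (by omega), hveq1 j h2]
        exact hm_above j h2
      · by_cases h3 : j + 1 < n - d
        · rw [hveq2 j (by omega) (by omega), hveq2 (j+1) (by omega) h3]
        · by_cases h4 : j < n - d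
          · rw [hveq2 j (by omega) h4, hveq3 (j+1) (by omega)]
            exact hM_below (j+1) (by omega) hj
          · rw [hveq3 j (by omega), hveq3 (j+1) (by omega)]
            exact hM_dec j (j+1) (by omega) hj
  have hmono : ∀ i j, i ≤ j → j < n → xstar j ≤ xstar i := by
    intro i j hij hjn
    induction j, hij using Nat.le_induction with
    | base => exact le_rfl
    | succ j hij ih => exact le_trans (hadj j hjn) (ih (by omega))
  have hbounds : ∀ i, i < n → m i ≤ xstar i ∧ xstar i ≤ M i := by
    intro i hi
    by_cases h1 : i < k
    · rw [hveq1 _ h1]; exact ⟨le_rfl, hmM i hi⟩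
    · by_cases h2 : i < n - d
      · rw [hveq2 i (by omega) h2]
        exact ⟨le_trans (hm_dec k i (by omega) hi) hρ₁,
          le_trans hρ₂ (hM_dec i (n-d-1) (by omega) (by omega))⟩
      · rw [hveq3 i (by omega)]; exact ⟨hmM i hi, le_rfl⟩
  have hnonneg : ∀ i, i < n → 0 ≤ xstar i := by
    intro i hi
    by_cases h1 : i < k
    · rw [hveq1 _ h1]; exact hm_nonneg i hi
    · by_cases h2 : i < n - d
      · rw [hveq2 i (by omega) h2]; exact le_trans (hm_nonneg k (by omega)) hρ₁
      · rw [hveq3 i (by omega)]; exact le_trans (hm_nonneg i hi) (hmM i hi)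
  refine ⟨⟨hmono, hnonneg, hsum_xstar, hbounds⟩, ?_⟩
  rintro x ⟨hxmono, hxnn, hxsum, hxb⟩
  refine ⟨?_, by rw [hsum_xstar, hxsum]⟩
  intro j hj1 hjn1
  have hjn : j < n := by omega
  have split_x : ∀ f : ℕ → ℝ,
      (∑ i ∈ range j, f i) + ∑ i ∈ Ico j n, f i = ∑ i ∈ range n, f i := by
    intro f
    rw [Finset.range_eq_Ico, Finset.range_eq_Ico]
    exact Finset.sum_Ico_consecutive _ (Nat.zero_le _) (le_of_lt hjn)
  by_cases hA : j ≤ k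
  · have e : ∑ i ∈ range j, xstar i = ∑ i ∈ range j, m i :=
      Finset.sum_congr rfl fun i hi => hveq1 i (by have := Finset.mem_range.1 hi; omega)
    rw [e]
    exact Finset.sum_le_sum fun i hi =>
      (hxb i (by have := Finset.mem_range.1 hi; omega)).1
  · by_cases hB : n - d ≤ j
    · have exs : ∑ i ∈ Ico j n, xstar i = ∑ i ∈ Ico j n, M i :=
        Finset.sum_congr rfl fun i hi => hveq3 i (by have := Finset.mem_Ico.1 hi; omega)
      have hle : ∑ i ∈ Ico j n, x i ≤ ∑ i ∈ Ico j n, M i :=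
        Finset.sum_le_sum fun i hi => (hxb i (Finset.mem_Ico.1 hi).2).2
      have s1 := split_x xstar
      have s2 := split_x x
      rw [hsum_xstar] at s1; rw [hxsum] at s2
      linarith [exs ▸ s1]
    · push_neg at hA hB
      have havg := avg_prefix_aux x n k j (n-d) hxmono hA (le_of_lt hB) hNn
      have hPQ : (∑ i ∈ range k, x i) + ∑ i ∈ Ico k j, x i = ∑ i ∈ range j, x i := by
        rw [Finset.range_eq_Ico, Finset.range_eq_Ico]
        exact Finset.sum_Ico_consecutive _ (Nat.zero_le _) (le_of_lt hA)
      have hmid : ∑ i ∈ Ico k (n-d), x i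
          = a - (∑ i ∈ range k, x i) - ∑ i ∈ Ico (n-d) n, x i := by
        have e1 : (∑ i ∈ Ico 0 k, x i) + ∑ i ∈ Ico k (n-d), x i
            = ∑ i ∈ Ico 0 (n-d), x i :=
          Finset.sum_Ico_consecutive _ (by omega) (by omega)
        have e2 : (∑ i ∈ Ico 0 (n-d), x i) + ∑ i ∈ Ico (n-d) n, x i
            = ∑ i ∈ Ico 0 n, x i :=
          Finset.sum_Ico_consecutive _ (by omega) hNn
        rw [Finset.range_eq_Ico] at hxsum ⊢
        linarith [e1, e2, hxsum]
      have hLHS : ∑ i ∈ range j, xstar i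
          = (∑ i ∈ range k, m i) + ((j:ℝ) - k) * ρ := by
        have e1 : (∑ i ∈ Ico 0 k, xstar i) + ∑ i ∈ Ico k j, xstar i
            = ∑ i ∈ Ico 0 j, xstar i :=
          Finset.sum_Ico_consecutive _ (by omega) (le_of_lt hA)
        have e4 : ∑ i ∈ Ico k j, xstar i = ((j-k:ℕ):ℝ) * ρ := by
          rw [Finset.sum_congr rfl fun i hi => hveq2 i (Finset.mem_Ico.1 hi).1
              (by have := Finset.mem_Ico.1 hi; omega),
            Finset.sum_const, Nat.card_Ico, nsmul_eq_mul]
        have hc : ((j-k:ℕ):ℝ) = (j:ℝ) - k := by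
          rw [Nat.cast_sub (le_of_lt hA)]
        rw [Finset.range_eq_Ico, ← e1, e3, e4, hc, Finset.range_eq_Ico]
      rw [hLHS, ← hPQ]
      rw [hmid] at havg
      have hPm : ∑ i ∈ range k, m i ≤ ∑ i ∈ range k, x i :=
        Finset.sum_le_sum fun i hi =>
          (hxb i (by have := Finset.mem_range.1 hi; omega)).1
      have hTM : ∑ i ∈ Ico (n-d) n, x i ≤ ∑ i ∈ Ico (n-d) n, M i :=
        Finset.sum_le_sum fun i hi => (hxb i (Finset.mem_Ico.1 hi).2).2
      have hDeq : ((n-d:ℕ):ℝ) - k = (n:ℝ) - k - d := by rw [hcastN]; ring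
      rw [hDeq] at havg
      have hlam1 : (0:ℝ) < (j:ℝ) - k := by
        have : (k:ℝ) < j := by exact_mod_cast hA
        linarith
      have hlam2 : ((j:ℝ) - k) ≤ (n:ℝ) - k - d := by
        have : (j:ℝ) < (n:ℝ) - d := by
          rw [← hcastN]; exact_mod_cast hB
        linarith
      have key : (0:ℝ) ≤ ((n:ℝ) - k - d) *
          ((∑ i ∈ range k, x i) + (∑ i ∈ Ico k j, x i)
            - ((∑ i ∈ range k, m i) + ((j:ℝ) - k) * ρ)) := by
        nlinarith [havg, hρden, hden, hlam1, hlam2, hPm, hTM,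
          mul_nonneg (sub_nonneg.2 hlam2) (sub_nonneg.2 hPm),
          mul_nonneg (le_of_lt hlam1) (sub_nonneg.2 hTM)]
      nlinarith [key, hden]
end

section
/- Let 1 ≤ h ≤ n, 0 ≤ m_2 ≤ m_1, 0 ≤ M_2 ≤ M_1 with m_i < M_i for i = 1, 2, and let a be a real number with h·m_1 + (n−h)·m_2 ≤ a ≤ h·M_1 + (n−h)·M_2. Let S_a^[h] = {x ∈ ℝ^n : x_1 ≥ ⋯ ≥ x_n, Σ_{i=1}^n x_i = a, M_1 ≥ x_1 ≥ ⋯ ≥ x_h ≥ m_1, M_2 ≥ x_{h+1} ≥ ⋯ ≥ x_n ≥ m_2} and set a* = h·M_1 + (n−h)·m_2. If a < a*, put k = ⌊(a − h(m_1−m_2) − n·m_2)/(M_1−m_1)⌋; then the vector x* = (M_1 repeated k times, θ, m_1 repeated h−k−1 times, m_2 repeated n−h times), with θ chosen so that the components of x* sum to a, belongs to S_a^[h] and majorizes every x ∈ S_a^[h]. If a ≥ a*, put k = ⌊(a − h(M_1−M_2) − n·m_2)/(M_2−m_2)⌋; then the vector x* = (M_1 repeated h times, M_2 repeated k−h times,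 θ, m_2 repeated n−k−1 times), with θ chosen so that the components of x* sum to a, belongs to S_a^[h] and majorizes every x ∈ S_a^[h]. -/
open Finset

/-- Membership in the set `S_a^{[h]}`: `x` is nonincreasing, sums to `a`,
the first `h` components lie in `[m₁, M₁]` and the remaining ones in `[m₂, M₂]`.
(0-indexed.) -/
def memSah (n h : ℕ) (m1 m2 M1 M2 a : ℝ) (x : ℕ → ℝ) : Prop :=
  (∀ i j, i ≤ j → j < n → x j ≤ x i) ∧
  (∑ i ∈ Finset.range n, x i = a) ∧
  (∀ i, i < h → m1 ≤ x i ∧ x i ≤ M1) ∧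
  (∀ i, h ≤ i → i < n → m2 ≤ x i ∧ x i ≤ M2)

/-- `y ⊴ x` for vectors of length `n` (0-indexed): all partial sums of `y` up to
`n - 1` are bounded by those of `x` and the total sums coincide. -/
def majorizedBy (n : ℕ) (y x : ℕ → ℝ) : Prop :=
  (∀ k, 1 ≤ k → k ≤ n - 1 →
    ∑ i ∈ Finset.range k, y i ≤ ∑ i ∈ Finset.range k, x i) ∧
  ∑ i ∈ Finset.range n, y i = ∑ i ∈ Finset.range n, x i

private lemma mono_of_step (n : ℕ) (f : ℕ → ℝ)
    (hstep : ∀ i, i + 1 < n → f (i + 1) ≤ f i) :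
    ∀ i j, i ≤ j → j < n → f j ≤ f i := by
  intro i j hij hjn
  induction j with
  | zero =>
    have : i = 0 := Nat.le_zero.mp hij
    subst this; exact le_rfl
  | succ j ih =>
    rcases Nat.lt_or_ge i (j + 1) with hlt | hge
    · exact le_trans (hstep j hjn) (ih (Nat.lt_succ_iff.mp hlt) (by omega))
    · have : i = j + 1 := le_antisymm hij hge
      subst this; exact le_rfl

private lemma maj_aux (n k : ℕ) (x y : ℕ → ℝ)
    (h1 : ∀ i, i < k → x i ≤ y i)
    (h2 : ∀ i, k < i → i < n → y i ≤ x i)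
    (hsum : ∑ i ∈ Finset.range n, x i = ∑ i ∈ Finset.range n, y i) :
    majorizedBy n x y := by
  refine ⟨fun t ht1 ht2 => ?_, hsum⟩
  by_cases hc : t ≤ k
  · exact Finset.sum_le_sum fun i hi =>
      h1 i (lt_of_lt_of_le (Finset.mem_range.mp hi) hc)
  · have htn : t ≤ n := by omega
    have hx : (∑ i ∈ Finset.range t, x i) + ∑ i ∈ Finset.Ico t n, x i
        = ∑ i ∈ Finset.range n, x i := by
      rw [Finset.range_eq_Ico, Finset.range_eq_Ico]
      exact Finset.sum_Ico_consecutive x (Nat.zero_le t) htn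
    have hy : (∑ i ∈ Finset.range t, y i) + ∑ i ∈ Finset.Ico t n, y i
        = ∑ i ∈ Finset.range n, y i := by
      rw [Finset.range_eq_Ico, Finset.range_eq_Ico]
      exact Finset.sum_Ico_consecutive y (Nat.zero_le t) htn
    have hico : ∑ i ∈ Finset.Ico t n, y i ≤ ∑ i ∈ Finset.Ico t n, x i :=
      Finset.sum_le_sum fun i hi => by
        have := Finset.mem_Ico.mp hi
        exact h2 i (by omega) this.2
    linarith

private lemma sum_Ico_const_val (f : ℕ → ℝ) (c : ℝ) (a b : ℕ)
    (h : ∀ i, a ≤ i → i < b → f i = c) :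
    ∑ i ∈ Finset.Ico a b, f i = ((b - a : ℕ) : ℝ) * c := by
  rw [Finset.sum_congr rfl
      (fun i hi => h i (Finset.mem_Ico.mp hi).1 (Finset.mem_Ico.mp hi).2),
    Finset.sum_const, Nat.card_Ico, nsmul_eq_mul]

set_option maxHeartbeats 1000000 in
/-- Corollary 3 in [BCT1]: the maximal element of `S_a^{[h]}` with respect to the
majorization order. -/
theorem maximal_element_of_Sah (n h : ℕ) (hh1 : 1 ≤ h) (hhn : h ≤ n)
    (m1 m2 M1 M2 : ℝ)
    (hm2 : 0 ≤ m2) (hm21 : m2 ≤ m1) (hM2 : 0 ≤ M2) (hM21 : M2 ≤ M1)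
    (hmM1 : m1 < M1) (hmM2 : m2 < M2)
    (a : ℝ)
    (ha1 : (h : ℝ) * m1 + ((n : ℝ) - h) * m2 ≤ a)
    (ha2 : a ≤ (h : ℝ) * M1 + ((n : ℝ) - h) * M2) :
    (a < (h : ℝ) * M1 + ((n : ℝ) - h) * m2 →
      ∀ k : ℕ, k = ⌊(a - h * (m1 - m2) - n * m2) / (M1 - m1)⌋₊ →
      ∀ θ : ℝ, ∀ xstar : ℕ → ℝ,
        (∀ i, xstar i =
          if i < k then M1 else if i = k then θ else if i < h then m1 else m2) →
        ∑ i ∈ Finset.range n, xstar i = a →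
        memSah n h m1 m2 M1 M2 a xstar ∧
          ∀ x, memSah n h m1 m2 M1 M2 a x → majorizedBy n x xstar) ∧
    ((h : ℝ) * M1 + ((n : ℝ) - h) * m2 ≤ a →
      ∀ k : ℕ, k = ⌊(a - h * (M1 - M2) - n * m2) / (M2 - m2)⌋₊ →
      ∀ θ : ℝ, ∀ xstar : ℕ → ℝ,
        (∀ i, xstar i =
          if i < h then M1 else if i < k then M2 else if i = k then θ else m2) →
        ∑ i ∈ Finset.range n, xstar i = a →
        memSah n h m1 m2 M1 M2 a xstar ∧
          ∀ x, memSah n h m1 m2 M1 M2 a x → majorizedBy n x xstar) := by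
  constructor
  · -- Case a < a*
    intro halt k hk θ xstar hxstar hsum2
    have hM1m1 : (0:ℝ) < M1 - m1 := by linarith
    have hnum0 : 0 ≤ a - h * (m1 - m2) - n * m2 := by linarith
    have hq0 : 0 ≤ (a - h * (m1 - m2) - n * m2) / (M1 - m1) :=
      div_nonneg hnum0 hM1m1.le
    have hkq : (k:ℝ) ≤ (a - h * (m1 - m2) - n * m2) / (M1 - m1) := by
      rw [hk]; exact Nat.floor_le hq0
    have hqk1 : (a - h * (m1 - m2) - n * m2) / (M1 - m1) < (k:ℝ) + 1 := by
      rw [hk]; exact Nat.lt_floor_add_one _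
    have hknum : (k:ℝ) * (M1 - m1) ≤ a - h * (m1 - m2) - n * m2 :=
      (le_div_iff₀ hM1m1).mp hkq
    have hnumk : a - h * (m1 - m2) - n * m2 < ((k:ℝ) + 1) * (M1 - m1) := by
      have := (div_lt_iff₀ hM1m1).mp hqk1
      linarith
    have hkh : k < h := by
      have hqh : (a - h * (m1 - m2) - n * m2) / (M1 - m1) < (h:ℝ) := by
        rw [div_lt_iff₀ hM1m1]; linarith
      have : (k:ℝ) < (h:ℝ) := lt_of_le_of_lt hkq hqh
      exact_mod_cast this
    have hk1h : k + 1 ≤ h := hkh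
    have hkn : k < n := lt_of_lt_of_le hkh hhn
    -- evaluate the sum
    have e1 : ∑ i ∈ Finset.Ico 0 k, xstar i = ((k - 0 : ℕ) : ℝ) * M1 :=
      sum_Ico_const_val _ _ _ _ (fun i _ hik => by
        rw [hxstar, if_pos hik])
    have e2 : ∑ i ∈ Finset.Ico k (k+1), xstar i = θ := by
      rw [Finset.sum_Ico_succ_top (le_refl k), Finset.Ico_self,
        Finset.sum_empty, zero_add, hxstar, if_neg (lt_irrefl k), if_pos rfl]
    have e3 : ∑ i ∈ Finset.Ico (k+1) h, xstar i = ((h - (k+1) : ℕ) : ℝ) * m1 :=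
      sum_Ico_const_val _ _ _ _ (fun i hi1 hi2 => by
        rw [hxstar, if_neg (by omega), if_neg (by omega), if_pos hi2])
    have e4 : ∑ i ∈ Finset.Ico h n, xstar i = ((n - h : ℕ) : ℝ) * m2 :=
      sum_Ico_const_val _ _ _ _ (fun i hi1 _ => by
        rw [hxstar, if_neg (by omega), if_neg (by omega), if_neg (by omega)])
    have esum : ∑ i ∈ Finset.range n, xstar i
        = (k:ℝ) * M1 + θ + ((h:ℝ) - k - 1) * m1 + ((n:ℝ) - h) * m2 := by
      rw [Finset.range_eq_Ico,
        ← Finset.sum_Ico_consecutive xstar (Nat.zero_le h) hhn,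
        ← Finset.sum_Ico_consecutive xstar (Nat.zero_le (k+1)) hk1h,
        ← Finset.sum_Ico_consecutive xstar (Nat.zero_le k) (Nat.le_succ k),
        e1, e2, e3, e4, Nat.sub_zero, Nat.cast_sub hk1h, Nat.cast_sub hhn]
      push_cast
      ring
    have hθa : (k:ℝ) * M1 + θ + ((h:ℝ) - k - 1) * m1 + ((n:ℝ) - h) * m2 = a := by
      rw [← esum]; exact hsum2
    have hθ1 : m1 ≤ θ := by linarith
    have hθ2 : θ ≤ M1 := by linarith
    have hstep : ∀ i, i + 1 < n → xstar (i + 1) ≤ xstar i := by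
      intro i _
      rw [hxstar, hxstar]
      split_ifs <;> first | omega | linarith
    refine ⟨⟨mono_of_step n xstar hstep, hsum2, ?_, ?_⟩, ?_⟩
    · intro i hi
      rw [hxstar]
      split_ifs <;> first | omega | exact ⟨by linarith, by linarith⟩
    · intro i hi1 hi2
      rw [hxstar]
      split_ifs <;> first | omega | exact ⟨le_rfl, hmM2.le⟩
    · rintro x ⟨hxm, hxs, hxb1, hxb2⟩
      refine maj_aux n k x xstar ?_ ?_ (by rw [hxs, hsum2])
      · intro i hik
        rw [hxstar, if_pos hik]
        exact (hxb1 i (by omega)).2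
      · intro i hki hin
        rw [hxstar, if_neg (by omega), if_neg (by omega)]
        by_cases hih : i < h
        · rw [if_pos hih]; exact (hxb1 i hih).1
        · rw [if_neg hih]; exact (hxb2 i (by omega) hin).1
  · -- Case a ≥ a*
    intro hage k hk θ xstar hxstar hsum2
    have hM2m2 : (0:ℝ) < M2 - m2 := by linarith
    have hhpos : (0:ℝ) ≤ (h:ℝ) * (M2 - m2) :=
      mul_nonneg (Nat.cast_nonneg h) hM2m2.le
    have hnum0 : 0 ≤ a - h * (M1 - M2) - n * m2 := by linarith [hhpos]
    have hq0 : 0 ≤ (a - h * (M1 - M2) - n * m2) / (M2 - m2) :=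
      div_nonneg hnum0 hM2m2.le
    have hkq : (k:ℝ) ≤ (a - h * (M1 - M2) - n * m2) / (M2 - m2) := by
      rw [hk]; exact Nat.floor_le hq0
    have hqk1 : (a - h * (M1 - M2) - n * m2) / (M2 - m2) < (k:ℝ) + 1 := by
      rw [hk]; exact Nat.lt_floor_add_one _
    have hknum : (k:ℝ) * (M2 - m2) ≤ a - h * (M1 - M2) - n * m2 :=
      (le_div_iff₀ hM2m2).mp hkq
    have hnumk : a - h * (M1 - M2) - n * m2 < ((k:ℝ) + 1) * (M2 - m2) := by
      have := (div_lt_iff₀ hM2m2).mp hqk1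
      linarith
    have hhk : h ≤ k := by
      rw [hk]
      refine Nat.le_floor ?_
      rw [le_div_iff₀ hM2m2]
      linarith
    have hkn : k ≤ n := by
      have hqn : (a - h * (M1 - M2) - n * m2) / (M2 - m2) ≤ (n:ℝ) := by
        rw [div_le_iff₀ hM2m2]; linarith
      have : (k:ℝ) ≤ (n:ℝ) := le_trans hkq hqn
      exact_mod_cast this
    by_cases hkltn : k < n
    · have hk1n : k + 1 ≤ n := hkltn
      have e1 : ∑ i ∈ Finset.Ico 0 h, xstar i = ((h - 0 : ℕ) : ℝ) * M1 :=
        sum_Ico_const_val _ _ _ _ (fun i _ hih => by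
          rw [hxstar, if_pos hih])
      have e2 : ∑ i ∈ Finset.Ico h k, xstar i = ((k - h : ℕ) : ℝ) * M2 :=
        sum_Ico_const_val _ _ _ _ (fun i hi1 hi2 => by
          rw [hxstar, if_neg (by omega), if_pos hi2])
      have e3 : ∑ i ∈ Finset.Ico k (k+1), xstar i = θ := by
        rw [Finset.sum_Ico_succ_top (le_refl k), Finset.Ico_self,
          Finset.sum_empty, zero_add, hxstar, if_neg (by omega),
          if_neg (lt_irrefl k), if_pos rfl]
      have e4 : ∑ i ∈ Finset.Ico (k+1) n, xstar i = ((n - (k+1) : ℕ) : ℝ) * m2 :=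
        sum_Ico_const_val _ _ _ _ (fun i hi1 _ => by
          rw [hxstar, if_neg (by omega), if_neg (by omega), if_neg (by omega)])
      have esum : ∑ i ∈ Finset.range n, xstar i
          = (h:ℝ) * M1 + ((k:ℝ) - h) * M2 + θ + ((n:ℝ) - k - 1) * m2 := by
        rw [Finset.range_eq_Ico,
          ← Finset.sum_Ico_consecutive xstar (Nat.zero_le (k+1)) hk1n,
          ← Finset.sum_Ico_consecutive xstar (Nat.zero_le k) (Nat.le_succ k),
          ← Finset.sum_Ico_consecutive xstar (Nat.zero_le h) hhk,
          e1, e2, e3, e4, Nat.sub_zero, Nat.cast_sub hhk, Nat.cast_sub hk1n]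
        push_cast
        ring
      have hθa : (h:ℝ) * M1 + ((k:ℝ) - h) * M2 + θ + ((n:ℝ) - k - 1) * m2 = a := by
        rw [← esum]; exact hsum2
      have hθ1 : m2 ≤ θ := by linarith
      have hθ2 : θ ≤ M2 := by linarith
      have hstep : ∀ i, i + 1 < n → xstar (i + 1) ≤ xstar i := by
        intro i _
        rw [hxstar, hxstar]
        split_ifs <;> first | omega | linarith
      refine ⟨⟨mono_of_step n xstar hstep, hsum2, ?_, ?_⟩, ?_⟩
      · intro i hi
        rw [hxstar, if_pos hi]
        exact ⟨by linarith, le_rfl⟩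
      · intro i hi1 hi2
        rw [hxstar]
        split_ifs <;> first | omega | exact ⟨by linarith, by linarith⟩
      · rintro x ⟨hxm, hxs, hxb1, hxb2⟩
        refine maj_aux n k x xstar ?_ ?_ (by rw [hxs, hsum2])
        · intro i hik
          rw [hxstar]
          by_cases hih : i < h
          · rw [if_pos hih]; exact (hxb1 i hih).2
          · rw [if_neg hih, if_pos hik]
            exact (hxb2 i (by omega) (by omega)).2
        · intro i hki hin
          rw [hxstar, if_neg (by omega), if_neg (by omega), if_neg (by omega)]
          exact (hxb2 i (by omega) hin).1
    · have hkeq : k = n := by omega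
      have hstep : ∀ i, i + 1 < n → xstar (i + 1) ≤ xstar i := by
        intro i hin
        rw [hxstar, hxstar]
        split_ifs <;> first | omega | linarith
      refine ⟨⟨mono_of_step n xstar hstep, hsum2, ?_, ?_⟩, ?_⟩
      · intro i hi
        rw [hxstar, if_pos hi]
        exact ⟨by linarith, le_rfl⟩
      · intro i hi1 hi2
        rw [hxstar]
        split_ifs <;> first | omega | exact ⟨by linarith, by linarith⟩
      · rintro x ⟨hxm, hxs, hxb1, hxb2⟩
        refine maj_aux n k x xstar ?_ ?_ (by rw [hxs, hsum2])
        · intro i hik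
          rw [hxstar]
          by_cases hih : i < h
          · rw [if_pos hih]; exact (hxb1 i hih).2
          · rw [if_neg hih, if_pos hik]
            exact (hxb2 i (by omega) (by omega)).2
        · intro i hki hin
          omega
end

section
/- Let 1 ≤ h ≤ n, 0 ≤ m_2 ≤ m_1, 0 ≤ M_2 ≤ M_1 with m_i < M_i for i = 1, 2, suppose m_1 ≤ M_2, and let a be a real number with h·m_1 + (n−h)·m_2 ≤ a ≤ h·M_1 + (n−h)·M_2. Let S_a^[h] = {x ∈ ℝ^n : x_1 ≥ ⋯ ≥ x_n, Σ_{i=1}^n x_i = a, M_1 ≥ x_1 ≥ ⋯ ≥ x_h ≥ m_1, M_2 ≥ x_{h+1} ≥ ⋯ ≥ x_n ≥ m_2}. Then the minimal element of S_a^[h] with respect to the majorization order (the vector x_* ∈ S_a^[h] with x_* ⊴ x for all x ∈ S_a^[h]) is: the constant vector (a/n, …, a/n) if m_1 ≤ a/n ≤ M_2; the vector (m_1 repeated h times, (a − h·m_1)/(n−h) repeated n−h times) if a/n < m_1; and the vector ((a − M_2(n−h))/h repeated h times, M_2 repeated n−h times) if a/n > M_2. -/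
open Finset

private lemma sum_split (x : ℕ → ℝ) (k n : ℕ) (hk : k ≤ n) :
    ∑ i ∈ Finset.range n, x i
      = ∑ i ∈ Finset.range k, x i + ∑ i ∈ Finset.Ico k n, x i := by
  rw [range_eq_Ico, ← Finset.sum_Ico_consecutive _ (Nat.zero_le k) hk, ← range_eq_Ico]

private lemma tail_le (x : ℕ → ℝ) (k n : ℕ) (hk : k ≤ n) (b : ℝ)
    (hb : ∀ i, k ≤ i → i < n → x i ≤ b) :
    ∑ i ∈ Finset.Ico k n, x i ≤ ((n : ℝ) - k) * b := by
  calc ∑ i ∈ Finset.Ico k n, x i ≤ ∑ i ∈ Finset.Ico k n, b := by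
        apply Finset.sum_le_sum
        intro i hi
        exact hb i (mem_Ico.mp hi).1 (mem_Ico.mp hi).2
    _ = ((n : ℝ) - k) * b := by
        rw [Finset.sum_const, Nat.card_Ico, nsmul_eq_mul, Nat.cast_sub hk]

private lemma head_ge (x : ℕ → ℝ) (k : ℕ) (b : ℝ)
    (hb : ∀ i, i < k → b ≤ x i) :
    (k : ℝ) * b ≤ ∑ i ∈ Finset.range k, x i := by
  calc (k : ℝ) * b = ∑ i ∈ Finset.range k, b := by
        rw [Finset.sum_const, card_range, nsmul_eq_mul]
    _ ≤ ∑ i ∈ Finset.range k, x i :=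
        Finset.sum_le_sum fun i hi => hb i (mem_range.mp hi)

private lemma avg_lemma (n : ℕ) (x : ℕ → ℝ)
    (hmono : ∀ i j, i ≤ j → j < n → x j ≤ x i) (k : ℕ) (hk : k ≤ n) :
    (k : ℝ) * ∑ i ∈ Finset.range n, x i ≤ (n : ℝ) * ∑ i ∈ Finset.range k, x i := by
  rcases Nat.eq_zero_or_pos k with rfl | hk1
  · simp
  have h1 : (k : ℝ) * x (k - 1) ≤ ∑ i ∈ Finset.range k, x i :=
    head_ge x k (x (k-1)) (fun i hi => hmono i (k-1) (by omega) (by omega))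
  have h2 : ∑ i ∈ Finset.Ico k n, x i ≤ ((n : ℝ) - k) * x (k - 1) :=
    tail_le x k n hk (x (k-1)) (fun i hi1 hi2 => hmono (k-1) i (by omega) hi2)
  have h3 := sum_split x k n hk
  have hkn : (k : ℝ) ≤ (n : ℝ) := by exact_mod_cast hk
  have hk0 : (0:ℝ) < (k : ℝ) := by exact_mod_cast hk1
  nlinarith [mul_le_mul_of_nonneg_left h2 (le_of_lt hk0),
    mul_le_mul_of_nonneg_left h1 (sub_nonneg.mpr hkn)]

private lemma sum_ite_step (h k : ℕ) (hk : h ≤ k) (u v : ℝ) :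
    ∑ i ∈ Finset.range k, (if i < h then u else v)
      = (h : ℝ) * u + ((k : ℝ) - h) * v := by
  rw [sum_split _ h k hk]
  have e1 : ∑ i ∈ Finset.range h, (if i < h then u else v) = (h:ℝ) * u := by
    rw [Finset.sum_congr rfl (fun i hi => if_pos (mem_range.mp hi))]
    rw [Finset.sum_const, card_range, nsmul_eq_mul]
  have e2 : ∑ i ∈ Finset.Ico h k, (if i < h then u else v) = ((k:ℝ) - h) * v := by
    rw [Finset.sum_congr rfl (fun i hi => if_neg (by
      have := (mem_Ico.mp hi).1; omega))]
    rw [Finset.sum_const, Nat.card_Ico, nsmul_eq_mul, Nat.cast_sub hk]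
  rw [e1, e2]

private lemma sum_ite_small (h k : ℕ) (hk : k ≤ h) (u v : ℝ) :
    ∑ i ∈ Finset.range k, (if i < h then u else v) = (k : ℝ) * u := by
  rw [Finset.sum_congr rfl (fun i hi => if_pos (by
    have := mem_range.mp hi; omega))]
  rw [Finset.sum_const, card_range, nsmul_eq_mul]


/-- Corollary 10 in [BCT1] (case `m₁ ≤ M₂`): the minimal element of `S_a^{[h]}`
with respect to the majorization order. -/
theorem minimal_element_of_Sah (n h : ℕ) (hh1 : 1 ≤ h) (hhn : h ≤ n)
    (m1 m2 M1 M2 : ℝ)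
    (hm2 : 0 ≤ m2) (hm21 : m2 ≤ m1) (hM2 : 0 ≤ M2) (hM21 : M2 ≤ M1)
    (hmM1 : m1 < M1) (hmM2 : m2 < M2) (hm1M2 : m1 ≤ M2)
    (a : ℝ)
    (ha1 : (h : ℝ) * m1 + ((n : ℝ) - h) * m2 ≤ a)
    (ha2 : a ≤ (h : ℝ) * M1 + ((n : ℝ) - h) * M2) :
    (m1 ≤ a / n → a / n ≤ M2 →
      ∀ xmin : ℕ → ℝ, (∀ i, xmin i = a / n) →
        memSah n h m1 m2 M1 M2 a xmin ∧
          ∀ x, memSah n h m1 m2 M1 M2 a x → majorizedBy n xmin x) ∧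
    (a / n < m1 →
      ∀ xmin : ℕ → ℝ,
        (∀ i, xmin i = if i < h then m1 else (a - h * m1) / ((n : ℝ) - h)) →
        memSah n h m1 m2 M1 M2 a xmin ∧
          ∀ x, memSah n h m1 m2 M1 M2 a x → majorizedBy n xmin x) ∧
    (M2 < a / n →
      ∀ xmin : ℕ → ℝ,
        (∀ i, xmin i = if i < h then (a - M2 * ((n : ℝ) - h)) / h else M2) →
        memSah n h m1 m2 M1 M2 a xmin ∧
          ∀ x, memSah n h m1 m2 M1 M2 a x → majorizedBy n xmin x) := by

  have hn1 : 1 ≤ n := le_trans hh1 hhn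
  have hn0 : (0:ℝ) < (n:ℝ) := by exact_mod_cast hn1
  have hh0 : (0:ℝ) < (h:ℝ) := by exact_mod_cast hh1
  have hhnR : (h:ℝ) ≤ (n:ℝ) := by exact_mod_cast hhn
  simp only [memSah, majorizedBy]
  refine ⟨?_, ?_, ?_⟩
  ·
      intro hm1a haM2 xmin hx
      constructor
      · refine ⟨?_, ?_, ?_, ?_⟩
        · intro i j _ _; rw [hx i, hx j]
        · rw [Finset.sum_congr rfl (fun i _ => hx i), Finset.sum_const, card_range,
            nsmul_eq_mul]
          field_simp
        · intro i _; rw [hx i]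
          exact ⟨hm1a, le_trans haM2 hM21⟩
        · intro i _ _; rw [hx i]
          exact ⟨le_trans hm21 (le_trans hm1a le_rfl), haM2⟩
      · rintro x ⟨hmono, hsum, hb1, hb2⟩
        constructor
        · intro k hk1 hkn
          have havg := avg_lemma n x hmono k (by omega)
          rw [hsum] at havg
          have hxs : ∑ i ∈ Finset.range k, xmin i = (k:ℝ) * (a / n) := by
            rw [Finset.sum_congr rfl (fun i _ => hx i), Finset.sum_const, card_range,
              nsmul_eq_mul]
          rw [hxs]
          rw [mul_div_assoc' (k:ℝ) a (n:ℝ), div_le_iff₀ hn0]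
          linarith [mul_comm ((n:ℝ)) (∑ i ∈ Finset.range k, x i)]
        · rw [hsum, Finset.sum_congr rfl (fun i _ => hx i), Finset.sum_const, card_range,
            nsmul_eq_mul]
          field_simp

  ·
      intro ha xmin hx
      have haR : a < (n:ℝ) * m1 := by
        rw [div_lt_iff₀ hn0] at ha; linarith
      have hnh : h < n := by
        rcases lt_or_eq_of_le hhn with h' | h'
        · exact h'
        · exfalso
          rw [h'] at ha1
          simp at ha1
          nlinarith
      have hnhR : (h:ℝ) < (n:ℝ) := by exact_mod_cast hnh
      have hnh0 : (0:ℝ) < (n:ℝ) - h := by linarith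
      set c : ℝ := (a - h * m1) / ((n : ℝ) - h) with hc
      have hc' : ((n:ℝ) - h) * c = a - h * m1 := by
        rw [hc]; field_simp
      have hcm1 : c ≤ m1 := by
        rw [hc, div_le_iff₀ hnh0]; nlinarith
      have hcm2 : m2 ≤ c := by
        rw [hc, le_div_iff₀ hnh0]; nlinarith
      have hxval : ∀ i, i < h → xmin i = m1 := fun i hi => by rw [hx i, if_pos hi]
      have hxval' : ∀ i, h ≤ i → xmin i = c := fun i hi => by
        rw [hx i, if_neg (by omega)]
      constructor
      · refine ⟨?_, ?_, ?_, ?_⟩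
        · intro i j hij hj
          rw [hx i, hx j]
          split_ifs with h1 h2 h2
          · exact le_rfl
          · omega
          · exact hcm1
          · exact le_rfl
        · rw [Finset.sum_congr rfl (fun i _ => hx i), sum_ite_step h n hhn]
          linarith [hc']
        · intro i hi; rw [hxval i hi]; exact ⟨le_rfl, le_of_lt hmM1⟩
        · intro i hi _; rw [hxval' i hi]
          exact ⟨hcm2, le_trans hcm1 hm1M2⟩
      · rintro x ⟨hmono, hsum, hb1, hb2⟩
        have hxsum : ∑ i ∈ Finset.range n, xmin i = a := by
          rw [Finset.sum_congr rfl (fun i _ => hx i), sum_ite_step h n hhn]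
          linarith [hc']
        refine ⟨?_, by rw [hxsum, hsum]⟩
        intro k hk1 hkn
        rcases le_or_gt k h with hkh | hkh
        · -- k ≤ h : xmin partial = k * m1
          rw [Finset.sum_congr rfl (fun i _ => hx i), sum_ite_small h k hkh]
          exact head_ge x k m1 (fun i hi => (hb1 i (by omega)).1)
        · -- h < k
          rw [Finset.sum_congr rfl (fun i _ => hx i), sum_ite_step h k (le_of_lt hkh)]
          set Sh := ∑ i ∈ Finset.range h, x i with hSh
          set Sk := ∑ i ∈ Finset.range k, x i with hSk
          have hShm1 : (h:ℝ) * m1 ≤ Sh := head_ge x h m1 (fun i hi => (hb1 i hi).1)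
          -- averaging on the shifted sequence
          have hmono' : ∀ i j, i ≤ j → j < n - h → x (h + j) ≤ x (h + i) := by
            intro i j hij hj
            exact hmono (h+i) (h+j) (by omega) (by omega)
          have havg := avg_lemma (n-h) (fun i => x (h+i)) hmono' (k-h) (by omega)
          have e1 : ∑ i ∈ Finset.range (n-h), x (h+i) = a - Sh := by
            have := sum_split x h n hhn
            rw [hsum] at this
            rw [← Finset.sum_Ico_eq_sum_range (f := x) (m := h) (n := n)]
            linarith
          have e2 : ∑ i ∈ Finset.range (k-h), x (h+i) = Sk - Sh := by
            have := sum_split x h k (le_of_lt hkh)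
            have e := Finset.sum_Ico_eq_sum_range (f := x) (m := h) (n := k)
            rw [e] at this
            linarith
          rw [e1, e2] at havg
          have ck1 : ((k - h : ℕ) : ℝ) = (k:ℝ) - h := by
            rw [Nat.cast_sub (le_of_lt hkh)]
          have ck2 : ((n - h : ℕ) : ℝ) = (n:ℝ) - h := by
            rw [Nat.cast_sub hhn]
          rw [ck1, ck2] at havg
          -- havg : (k - h) * (a - Sh) ≤ (n - h) * (Sk - Sh)
          have hknR : (k:ℝ) ≤ (n:ℝ) - 1 := by
            have : k ≤ n - 1 := hkn
            have : (k:ℝ) ≤ ((n-1:ℕ):ℝ) := by exact_mod_cast this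
            rwa [Nat.cast_sub hn1, Nat.cast_one] at this
          have key : ((n:ℝ) - h) * ((h:ℝ) * m1 + ((k:ℝ) - h) * c)
              ≤ ((n:ℝ) - h) * Sk := by
            have expand : ((n:ℝ) - h) * ((h:ℝ) * m1 + ((k:ℝ) - h) * c)
                = ((n:ℝ) - h) * ((h:ℝ) * m1) + ((k:ℝ) - h) * (a - (h:ℝ) * m1) := by
              linear_combination ((k:ℝ) - h) * hc'
            rw [expand]
            have P : (0:ℝ) ≤ ((n:ℝ) - k) * (Sh - (h:ℝ) * m1) :=
              mul_nonneg (by linarith) (by linarith)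
            linarith [havg, P]
          exact le_of_mul_le_mul_left key hnh0

  ·
      intro ha xmin hx
      have haR : (n:ℝ) * M2 < a := by
        rw [lt_div_iff₀ hn0] at ha; linarith
      set d : ℝ := (a - M2 * ((n:ℝ) - h)) / h with hd
      have hd' : (h:ℝ) * d = a - M2 * ((n:ℝ) - h) := by
        rw [hd]; field_simp
      have hdM2 : M2 ≤ d := by
        rw [hd, le_div_iff₀ hh0]; nlinarith
      have hdM1 : d ≤ M1 := by
        rw [hd, div_le_iff₀ hh0]; nlinarith
      have hxval : ∀ i, i < h → xmin i = d := fun i hi => by rw [hx i, if_pos hi]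
      have hxval' : ∀ i, h ≤ i → xmin i = M2 := fun i hi => by
        rw [hx i, if_neg (by omega)]
      have hxsum : ∑ i ∈ Finset.range n, xmin i = a := by
        rw [Finset.sum_congr rfl (fun i _ => hx i), sum_ite_step h n hhn]
        linarith [hd']
      constructor
      · refine ⟨?_, hxsum, ?_, ?_⟩
        · intro i j hij hj
          rw [hx i, hx j]
          split_ifs with h1 h2 h2
          · exact le_rfl
          · omega
          · exact hdM2
          · exact le_rfl
        · intro i hi; rw [hxval i hi]
          exact ⟨le_trans hm1M2 hdM2, hdM1⟩
        · intro i hi _; rw [hxval' i hi]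
          exact ⟨le_of_lt hmM2, le_rfl⟩
      · rintro x ⟨hmono, hsum, hb1, hb2⟩
        refine ⟨?_, by rw [hxsum, hsum]⟩
        intro k hk1 hkn
        have hknR : (k:ℝ) ≤ (n:ℝ) - 1 := by
          have h' : (k:ℝ) ≤ ((n-1:ℕ):ℝ) := by exact_mod_cast hkn
          rwa [Nat.cast_sub hn1, Nat.cast_one] at h'
        have hkn' : k ≤ n := by omega
        set Sh := ∑ i ∈ Finset.range h, x i with hSh
        set Sk := ∑ i ∈ Finset.range k, x i with hSk
        have hShlow : a - ((n:ℝ) - h) * M2 ≤ Sh := by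
          have hsplit := sum_split x h n hhn
          rw [hsum] at hsplit
          have htail := tail_le x h n hhn M2 (fun i hi1 hi2 => (hb2 i hi1 hi2).2)
          linarith
        rcases le_or_gt k h with hkh | hkh
        · -- k ≤ h : xmin partial = k * d, use averaging on the first h entries
          rw [Finset.sum_congr rfl (fun i _ => hx i), sum_ite_small h k hkh]
          have hmono' : ∀ i j, i ≤ j → j < h → x j ≤ x i :=
            fun i j hij hj => hmono i j hij (by omega)
          have havg := avg_lemma h x hmono' k hkh
          -- havg : k * Sh ≤ h * Sk
          have hk0 : (0:ℝ) ≤ (k:ℝ) := by positivity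
          have key : (h:ℝ) * ((k:ℝ) * d) ≤ (h:ℝ) * Sk := by
            have expand : (h:ℝ) * ((k:ℝ) * d) = (k:ℝ) * (a - M2 * ((n:ℝ) - h)) := by
              linear_combination (k:ℝ) * hd'
            rw [expand]
            have P : (0:ℝ) ≤ (k:ℝ) * (Sh - (a - ((n:ℝ) - h) * M2)) :=
              mul_nonneg hk0 (by linarith)
            linarith [havg, P]
          exact le_of_mul_le_mul_left key hh0
        · -- h < k
          rw [Finset.sum_congr rfl (fun i _ => hx i), sum_ite_step h k (le_of_lt hkh)]
          have hsplit := sum_split x k n hkn'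
          rw [hsum] at hsplit
          have htail := tail_le x k n hkn' M2
            (fun i hi1 hi2 => (hb2 i (by omega) hi2).2)
          linarith [hd']
end

section
/- Positive integers n−1 ≥ d_1 ≥ d_2 ≥ ⋯ ≥ d_n are the vertex degree sequence of a unicyclic graph (a connected simple graph on n vertices with n edges) if and only if n ≥ 3, Σ_{i=1}^n d_i = 2n, and at least three of the d_i are greater than or equal to 2 (i.e. d_3 ≥ 2). -/
/-- `d` (0-indexed) is the degree sequence of `G`: some relabelling of the
vertices realizes the degrees `d 0, …, d (n-1)`. -/
def IsDegreeSequence {n : ℕ} (G : SimpleGraph (Fin n)) (d : ℕ → ℕ) : Prop :=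
  ∃ σ : Equiv.Perm (Fin n), ∀ i : Fin n, (G.neighborSet (σ i)).ncard = d (i : ℕ)

open SimpleGraph


lemma ncard_nbhd {V : Type*} [Fintype V] (G : SimpleGraph V) [DecidableRel G.Adj] (v : V) :
    (G.neighborSet v).ncard = G.degree v := by
  rw [SimpleGraph.degree, SimpleGraph.neighborFinset, Set.ncard_eq_toFinset_card']

lemma edge_count {V : Type*} [Fintype V] (G : SimpleGraph V) [DecidableRel G.Adj] (m : ℕ)
    (h : ∑ v, G.degree v = 2 * m) : G.edgeSet.ncard = m := by
  classical
  have h2 := SimpleGraph.sum_degrees_eq_twice_card_edges G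
  rw [h] at h2
  have : G.edgeFinset.card = m := by omega
  rw [SimpleGraph.edgeFinset] at this
  rwa [Set.ncard_eq_toFinset_card']

lemma cycle_exists (n : ℕ) (h : 3 ≤ n) :
    ∃ G : SimpleGraph (Fin n), G.Connected ∧ G.edgeSet.ncard = n ∧
      ∀ v, (G.neighborSet v).ncard = 2 := by
  obtain ⟨m, rfl⟩ : ∃ m, n = m + 3 := ⟨n - 3, by omega⟩
  refine ⟨cycleGraph (m + 3), ?_, ?_, ?_⟩
  · exact cycleGraph_connected
  · refine edge_count _ _ ?_
    rw [Finset.sum_congr rfl (fun v _ => cycleGraph_degree_three_le (v := v))]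
    simp [Finset.sum_const, mul_comm]
  · intro v
    rw [ncard_nbhd, cycleGraph_degree_three_le]

lemma castSucc_ne_last' {n : ℕ} (a : Fin n) : a.castSucc ≠ Fin.last n := by
  intro h
  have := congrArg Fin.val h
  simp only [Fin.coe_castSucc, Fin.val_last] at this
  omega

def addLeaf {n : ℕ} (G : SimpleGraph (Fin n)) (t : Fin n) : SimpleGraph (Fin (n + 1)) where
  Adj x y := (∃ a b : Fin n, G.Adj a b ∧ x = a.castSucc ∧ y = b.castSucc) ∨
    (x = Fin.last n ∧ y = t.castSucc) ∨ (x = t.castSucc ∧ y = Fin.last n)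
  symm := by
    constructor; rintro x y (⟨a, b, h, rfl, rfl⟩ | ⟨rfl, rfl⟩ | ⟨rfl, rfl⟩)
    · exact Or.inl ⟨b, a, h.symm, rfl, rfl⟩
    · exact Or.inr (Or.inr ⟨rfl, rfl⟩)
    · exact Or.inr (Or.inl ⟨rfl, rfl⟩)
  loopless := by
    constructor; rintro x (⟨a, b, h, rfl, hab⟩ | ⟨rfl, h⟩ | ⟨h, rfl⟩)
    · obtain rfl := Fin.castSucc_injective _ hab
      exact G.loopless.irrefl a h
    · exact absurd h.symm (castSucc_ne_last' t)
    · exact absurd h.symm (castSucc_ne_last' t)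

lemma addLeaf_nbhd_last {n : ℕ} (G : SimpleGraph (Fin n)) (t : Fin n) :
    (addLeaf G t).neighborSet (Fin.last n) = {t.castSucc} := by
  ext y
  simp only [mem_neighborSet, Set.mem_singleton_iff]
  constructor
  · rintro (⟨a, b, h, hx, rfl⟩ | ⟨_, rfl⟩ | ⟨h, rfl⟩)
    · exact absurd hx.symm (castSucc_ne_last' a)
    · rfl
    · exact absurd h.symm (castSucc_ne_last' t)
  · rintro rfl
    exact Or.inr (Or.inl ⟨rfl, rfl⟩)

lemma addLeaf_nbhd_cast {n : ℕ} (G : SimpleGraph (Fin n)) (t : Fin n) (x : Fin n) :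
    (addLeaf G t).neighborSet x.castSucc =
      Fin.castSucc '' G.neighborSet x ∪ (if x = t then {Fin.last n} else ∅) := by
  ext y
  simp only [mem_neighborSet, Set.mem_union, Set.mem_image]
  constructor
  · rintro (⟨a, b, h, hx, rfl⟩ | ⟨h, rfl⟩ | ⟨h, rfl⟩)
    · obtain rfl := Fin.castSucc_injective _ hx
      exact Or.inl ⟨b, h, rfl⟩
    · exact absurd h (castSucc_ne_last' x)
    · have : x = t := Fin.castSucc_injective _ h
      subst this
      simp
  · rintro (⟨b, hb, rfl⟩ | hy)
    · exact Or.inl ⟨x, b, hb, rfl, rfl⟩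
    · split_ifs at hy with hxt
      · subst hxt
        simp only [Set.mem_singleton_iff] at hy
        subst hy
        exact Or.inr (Or.inr ⟨rfl, rfl⟩)
      · simp at hy

def addLeafHom {n : ℕ} (G : SimpleGraph (Fin n)) (t : Fin n) : G →g addLeaf G t :=
  ⟨Fin.castSucc, fun h => Or.inl ⟨_, _, h, rfl, rfl⟩⟩

lemma addLeaf_connected {n : ℕ} (G : SimpleGraph (Fin n)) (t : Fin n) (hG : G.Connected) :
    (addLeaf G t).Connected := by
  rw [connected_iff]
  refine ⟨?_, ⟨Fin.last n⟩⟩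
  have key : ∀ v, (addLeaf G t).Reachable t.castSucc v := by
    intro v
    induction v using Fin.lastCases with
    | last => exact SimpleGraph.Adj.reachable (Or.inr (Or.inr ⟨rfl, rfl⟩))
    | cast x => exact (hG.preconnected t x).map (addLeafHom G t)
  intro u v
  exact (key u).symm.trans (key v)

lemma addLeaf_deg_last {n : ℕ} (G : SimpleGraph (Fin n)) (t : Fin n) :
    ((addLeaf G t).neighborSet (Fin.last n)).ncard = 1 := by
  rw [addLeaf_nbhd_last]; simp

lemma addLeaf_deg_cast {n : ℕ} (G : SimpleGraph (Fin n)) (t : Fin n) (x : Fin n) :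
    ((addLeaf G t).neighborSet x.castSucc).ncard =
      (G.neighborSet x).ncard + (if x = t then 1 else 0) := by
  rw [addLeaf_nbhd_cast]
  split_ifs with hxt
  · rw [Set.ncard_union_eq ?_ (Set.toFinite _) (Set.toFinite _)]
    · rw [Set.ncard_image_of_injective _ (Fin.castSucc_injective n), Set.ncard_singleton]
    · rw [Set.disjoint_singleton_right]
      rintro ⟨a, -, ha⟩
      exact castSucc_ne_last' a ha
  · rw [Set.union_empty, Set.ncard_image_of_injective _ (Fin.castSucc_injective n), add_zero]

def extPerm {n : ℕ} (σ : Equiv.Perm (Fin n)) : Equiv.Perm (Fin (n + 1)) where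
  toFun := Fin.lastCases (Fin.last n) (fun j => (σ j).castSucc)
  invFun := Fin.lastCases (Fin.last n) (fun j => (σ.symm j).castSucc)
  left_inv := by
    intro i
    induction i using Fin.lastCases with
    | last => simp
    | cast j => simp
  right_inv := by
    intro i
    induction i using Fin.lastCases with
    | last => simp
    | cast j => simp

@[simp] lemma extPerm_last {n : ℕ} (σ : Equiv.Perm (Fin n)) :
    extPerm σ (Fin.last n) = Fin.last n := by
  simp [extPerm]

@[simp] lemma extPerm_cast {n : ℕ} (σ : Equiv.Perm (Fin n)) (j : Fin n) :
    extPerm σ j.castSucc = (σ j).castSucc := by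
  simp [extPerm]

lemma edge_count' {n : ℕ} (G : SimpleGraph (Fin n)) (m : ℕ)
    (h : ∑ v : Fin n, (G.neighborSet v).ncard = 2 * m) : G.edgeSet.ncard = m := by
  classical
  exact edge_count G m (by rw [← h]; exact Finset.sum_congr rfl fun v _ => (ncard_nbhd G v).symm)

lemma edge_count_of_degseq {n : ℕ} (G : SimpleGraph (Fin n)) (d : ℕ → ℕ)
    (hd : IsDegreeSequence G d) (hsum : ∑ i ∈ Finset.range n, d i = 2 * n) :
    G.edgeSet.ncard = n := by
  obtain ⟨σ, hσ⟩ := hd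
  apply edge_count'
  rw [← Equiv.sum_comp σ (fun v => (G.neighborSet v).ncard), Finset.sum_congr rfl (fun i _ => hσ i),
    ← hsum, Finset.sum_range]

lemma construct_cycle (n : ℕ) (h3 : 3 ≤ n) (d : ℕ → ℕ) (hall : ∀ i, i < n → d i = 2) :
    ∃ G : SimpleGraph (Fin n), G.Connected ∧ IsDegreeSequence G d := by
  obtain ⟨G, hc, -, hdeg⟩ := cycle_exists n h3
  exact ⟨G, hc, Equiv.refl _, fun i => by rw [hdeg]; exact (hall i i.isLt).symm⟩

lemma all_two (n : ℕ) (d : ℕ → ℕ) (h2 : ∀ i, i < n → 2 ≤ d i)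
    (hsum : ∑ i ∈ Finset.range n, d i = 2 * n) : ∀ i, i < n → d i = 2 := by
  have hle : ∀ i ∈ Finset.range n, (fun _ => 2) i ≤ d i :=
    fun i hi => h2 i (Finset.mem_range.mp hi)
  have hs : ∑ i ∈ Finset.range n, (fun _ => 2) i = ∑ i ∈ Finset.range n, d i := by
    simp [hsum, mul_comm]
  intro i hi
  exact ((Finset.sum_eq_sum_iff_of_le hle).mp hs i (Finset.mem_range.mpr hi)).symm

lemma construct : ∀ n, 3 ≤ n → ∀ d : ℕ → ℕ,
    (∀ i, i < n → 1 ≤ d i) → (∀ i, i < n → d i ≤ n - 1) →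
    (∀ i j, i ≤ j → j < n → d j ≤ d i) →
    ∑ i ∈ Finset.range n, d i = 2 * n → 2 ≤ d 2 →
    ∃ G : SimpleGraph (Fin n), G.Connected ∧ IsDegreeSequence G d := by
  refine Nat.le_induction ?base ?step
  case base =>
    intro d hpos hub hmono hsum hd2
    have h6 : d 0 + d 1 + d 2 = 6 := by
      have : ∑ i ∈ Finset.range 3, d i = d 0 + d 1 + d 2 := by
        rw [Finset.sum_range_succ, Finset.sum_range_succ, Finset.sum_range_one]
      omega
    have h01 := hmono 0 1 (by omega) (by omega)
    have h12 := hmono 1 2 (by omega) (by omega)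
    refine construct_cycle 3 le_rfl d ?_
    intro i hi
    interval_cases i <;> omega
  case step =>
    intro n hn IH d hpos hub hmono hsum hd2
    by_cases hdn : 2 ≤ d n
    · exact construct_cycle _ (by omega) d
        (all_two _ d (fun i hi => le_trans hdn (hmono i n (by omega) (by omega))) hsum)
    · have hdn1 : d n = 1 := by have := hpos n (by omega); omega
      have hsum' : ∑ i ∈ Finset.range n, d i = 2 * n + 1 := by
        rw [Finset.sum_range_succ] at hsum; omega
      have hd0 : 3 ≤ d 0 := by
        by_contra h
        have hle : ∑ i ∈ Finset.range n, d i ≤ ∑ _i ∈ Finset.range n, 2 :=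
          Finset.sum_le_sum (fun i hi => by
            have := hmono 0 i (Nat.zero_le _) (by have := Finset.mem_range.mp hi; omega)
            omega)
        simp only [Finset.sum_const, Finset.card_range, smul_eq_mul] at hle
        omega
      have hd1 : d 1 ≤ n - 1 := by
        by_contra h
        have h1 : d 1 = n := by have := hub 1 (by omega); omega
        have h0 : d 0 = n := by
          have := hub 0 (by omega); have := hmono 0 1 (by omega) (by omega); omega
        have hsplit : ∑ i ∈ Finset.range 3, d i + ∑ i ∈ Finset.Ico 3 (n + 1), d i
            = ∑ i ∈ Finset.range (n + 1), d i := by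
          rw [Finset.range_eq_Ico, Finset.range_eq_Ico]
          exact Finset.sum_Ico_consecutive d (by omega : 0 ≤ 3) (by omega : 3 ≤ n + 1)
        have h3s : ∑ i ∈ Finset.range 3, d i = d 0 + d 1 + d 2 := by
          rw [Finset.sum_range_succ, Finset.sum_range_succ, Finset.sum_range_one]
        have hlb : (n + 1 - 3) * 1 ≤ ∑ i ∈ Finset.Ico 3 (n + 1), d i := by
          have := Finset.card_nsmul_le_sum (Finset.Ico 3 (n + 1)) d 1
            (fun i hi => hpos i (by have := (Finset.mem_Ico.mp hi).2; omega))
          simpa [Nat.card_Ico] using this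
        omega
      have hd1' : ∀ i, 1 ≤ i → i < n + 1 → d i ≤ n - 1 :=
        fun i h1i hi => le_trans (hmono 1 i h1i hi) hd1
      classical
      set j₀ := Nat.findGreatest (fun j => d j = d 0) (n - 1) with hj₀def
      have hj₀le : j₀ ≤ n - 1 := Nat.findGreatest_le _
      have hj₀lt : j₀ < n := by omega
      have hPj₀ : d j₀ = d 0 :=
        Nat.findGreatest_spec (P := fun j => d j = d 0) (Nat.zero_le _) rfl
      have hafter : ∀ j, j₀ < j → j < n + 1 → d j < d 0 := by
        intro j hj hjn
        have hle : d j ≤ d 0 := hmono 0 j (Nat.zero_le _) hjn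
        rcases Nat.lt_or_ge j n with hjn' | hjn'
        · have hne : ¬ (d j = d 0) :=
            Nat.findGreatest_is_greatest (P := fun j => d j = d 0) hj (by omega)
          omega
        · have hjn'' : j = n := by omega
          subst hjn''
          omega
      set d' := fun i => if i = j₀ then d i - 1 else d i with hd'
      have hpos' : ∀ i, i < n → 1 ≤ d' i := by
        intro i hi
        simp only [hd']
        split_ifs with h
        · subst h; omega
        · exact hpos i (by omega)
      have hub' : ∀ i, i < n → d' i ≤ n - 1 := by
        intro i hi
        simp only [hd']
        split_ifs with h
        · subst h; have := hub 0 (by omega); omega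
        · rcases Nat.eq_zero_or_pos i with rfl | hi1
          · have hj₀pos : 1 ≤ j₀ := by omega
            have := hmono 1 j₀ (by omega) (by omega)
            omega
          · exact hd1' i hi1 (by omega)
      have hmono' : ∀ i j, i ≤ j → j < n → d' j ≤ d' i := by
        intro i j hij hj
        simp only [hd']
        by_cases h1 : j = j₀ <;> by_cases h2 : i = j₀
        · subst h1; subst h2; simp
        · subst h1
          rw [if_pos rfl, if_neg h2]
          have := hmono i j₀ hij (by omega); omega
        · subst h2
          rw [if_neg h1, if_pos rfl]
          have h3 := hafter j (by omega) (by omega)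
          omega
        · rw [if_neg h1, if_neg h2]
          exact hmono i j hij (by omega)
      have hsum'2 : ∑ i ∈ Finset.range n, d' i = 2 * n := by
        have hmem : j₀ ∈ Finset.range n := Finset.mem_range.mpr hj₀lt
        have e1 : d' j₀ + ∑ i ∈ (Finset.range n).erase j₀, d' i
            = ∑ i ∈ Finset.range n, d' i := Finset.add_sum_erase _ _ hmem
        have e2 : d j₀ + ∑ i ∈ (Finset.range n).erase j₀, d i
            = ∑ i ∈ Finset.range n, d i := Finset.add_sum_erase _ _ hmem
        have e3 : ∑ i ∈ (Finset.range n).erase j₀, d' i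
            = ∑ i ∈ (Finset.range n).erase j₀, d i :=
          Finset.sum_congr rfl (fun i hi => by
            simp only [hd']; rw [if_neg (Finset.ne_of_mem_erase hi)])
        have e4 : d' j₀ = d j₀ - 1 := by simp [hd']
        omega
      have hd2' : 2 ≤ d' 2 := by
        simp only [hd']
        split_ifs with h
        · rw [← h] at hPj₀; omega
        · exact hd2
      obtain ⟨G', hG'conn, σ', hσ'⟩ := IH d' hpos' hub' hmono' hsum'2 hd2'
      set t := σ' ⟨j₀, hj₀lt⟩ with ht
      refine ⟨addLeaf G' t, addLeaf_connected _ _ hG'conn, extPerm σ', ?_⟩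
      intro i
      induction i using Fin.lastCases with
      | last =>
        rw [extPerm_last, addLeaf_deg_last]
        simp [Fin.val_last, hdn1]
      | cast j =>
        rw [extPerm_cast, addLeaf_deg_cast, hσ' j]
        have hcoe : ((j.castSucc : Fin (n + 1)) : ℕ) = (j : ℕ) := rfl
        rw [hcoe]
        by_cases hj : j = ⟨j₀, hj₀lt⟩
        · subst hj
          rw [if_pos rfl]
          have e : d' j₀ = d j₀ - 1 := by simp [hd']
          have hval : (((⟨j₀, hj₀lt⟩ : Fin n) : ℕ)) = j₀ := rfl
          rw [hval]
          omega
        · rw [if_neg (fun h => hj (σ'.injective h)), add_zero]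
          simp only [hd']
          rw [if_neg (by simpa [Fin.ext_iff] using hj)]

lemma other_endpoint {V : Type*} (G : SimpleGraph V) (e : Sym2 V) (w : V)
    (he : e ∈ G.edgeSet) (hw : w ∈ e) : ∃ a, G.Adj w a ∧ e = s(w, a) := by
  revert he hw
  induction e using Sym2.ind with
  | _ x y =>
    intro he hw
    rcases Sym2.mem_iff.mp hw with rfl | rfl
    · exact ⟨y, G.mem_edgeSet.mp he, rfl⟩
    · exact ⟨x, (G.mem_edgeSet.mp he).symm, Sym2.eq_swap⟩

lemma forward {n : ℕ} (d : ℕ → ℕ)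
    (hpos : ∀ i, i < n → 1 ≤ d i) (hub : ∀ i, i < n → d i ≤ n - 1)
    (hmono : ∀ i j, i ≤ j → j < n → d j ≤ d i)
    (G : SimpleGraph (Fin n)) (hconn : G.Connected) (hedge : G.edgeSet.ncard = n)
    (σ : Equiv.Perm (Fin n)) (hσ : ∀ i : Fin n, (G.neighborSet (σ i)).ncard = d i) :
    3 ≤ n ∧ ∑ i ∈ Finset.range n, d i = 2 * n ∧ 2 ≤ d 2 := by
  classical
  have hn0 : 0 < n := by
    rcases hconn.nonempty with ⟨v⟩; exact v.pos
  have hE : G.edgeFinset.card = n := by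
    rw [SimpleGraph.edgeFinset, ← Set.ncard_eq_toFinset_card']
    exact hedge
  have hsum : ∑ i ∈ Finset.range n, d i = 2 * n := by
    have h1 : ∑ v, G.degree v = 2 * G.edgeFinset.card :=
      SimpleGraph.sum_degrees_eq_twice_card_edges G
    rw [Finset.sum_range]
    calc ∑ i : Fin n, d i = ∑ i : Fin n, (G.neighborSet (σ i)).ncard :=
          Finset.sum_congr rfl fun i _ => (hσ i).symm
      _ = ∑ v, (G.neighborSet v).ncard := Equiv.sum_comp σ (fun v => (G.neighborSet v).ncard)
      _ = ∑ v, G.degree v := Finset.sum_congr rfl fun v _ => ncard_nbhd G v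
      _ = 2 * n := by rw [h1, hE]
  have h3 : 3 ≤ n := by
    by_contra h
    have hle : ∑ i ∈ Finset.range n, d i ≤ ∑ _i ∈ Finset.range n, (n - 1) :=
      Finset.sum_le_sum fun i hi => hub i (Finset.mem_range.mp hi)
    simp only [Finset.sum_const, Finset.card_range, smul_eq_mul] at hle
    interval_cases n <;> omega
  refine ⟨h3, hsum, ?_⟩
  by_contra hd2
  push_neg at hd2
  set u := σ ⟨0, by omega⟩ with hu
  set v := σ ⟨1, by omega⟩ with hv
  have huv : u ≠ v := fun h => by
    have := σ.injective h
    simp [Fin.ext_iff] at this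
  have hleaf : ∀ w : Fin n, w ≠ u → w ≠ v → (G.neighborSet w).ncard ≤ 1 := by
    intro w hwu hwv
    have hi2 : 2 ≤ ((σ.symm w : Fin n) : ℕ) := by
      by_contra hlt
      push_neg at hlt
      have hcase : ((σ.symm w : Fin n) : ℕ) = 0 ∨ ((σ.symm w : Fin n) : ℕ) = 1 := by omega
      rcases hcase with h | h
      · apply hwu
        have h0 : σ.symm w = ⟨0, by omega⟩ := Fin.ext h
        rw [hu, ← h0, σ.apply_symm_apply]
      · apply hwv
        have h0 : σ.symm w = ⟨1, by omega⟩ := Fin.ext h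
        rw [hv, ← h0, σ.apply_symm_apply]
    calc (G.neighborSet w).ncard = d ((σ.symm w : Fin n) : ℕ) := by
          conv_lhs => rw [← σ.apply_symm_apply w]
          exact hσ (σ.symm w)
      _ ≤ d 2 := hmono 2 _ hi2 (σ.symm w).isLt
      _ ≤ 1 := by omega
  set e₀ : Sym2 (Fin n) := s(u, v) with he₀
  set E' := G.edgeFinset.erase e₀ with hE'
  have hcard1 : n - 1 ≤ E'.card := by
    have h := Finset.pred_card_le_card_erase (s := G.edgeFinset) (a := e₀)
    rw [← hE'] at h
    omega
  have hex : ∀ e ∈ E', ∃ w, w ∈ e ∧ w ≠ u ∧ w ≠ v := by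
    intro e he
    have heE : e ∈ G.edgeSet := SimpleGraph.mem_edgeFinset.mp (Finset.mem_of_mem_erase he)
    have hne : e ≠ e₀ := Finset.ne_of_mem_erase he
    clear he
    revert heE hne
    induction e using Sym2.ind with
    | _ x y =>
      intro heE hne
      have hadj : G.Adj x y := G.mem_edgeSet.mp heE
      by_cases hx : x ≠ u ∧ x ≠ v
      · exact ⟨x, Sym2.mem_mk_left _ _, hx.1, hx.2⟩
      by_cases hy : y ≠ u ∧ y ≠ v
      · exact ⟨y, Sym2.mem_mk_right _ _, hy.1, hy.2⟩
      exfalso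
      have hx' : x = u ∨ x = v := by tauto
      have hy' : y = u ∨ y = v := by tauto
      have hxy : x ≠ y := hadj.ne
      rcases hx' with rfl | rfl <;> rcases hy' with rfl | rfl
      · exact hxy rfl
      · exact hne rfl
      · exact hne Sym2.eq_swap
      · exact hxy rfl
  set f : Sym2 (Fin n) → Fin n :=
    fun e => if h : ∃ w, w ∈ e ∧ w ≠ u ∧ w ≠ v then h.choose else u with hf
  have hfspec : ∀ e ∈ E', f e ∈ e ∧ f e ≠ u ∧ f e ≠ v := by
    intro e he
    have h := hex e he
    rw [hf]
    simp only [dif_pos h]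
    exact h.choose_spec
  have hmaps : ∀ e ∈ E', f e ∈ (Finset.univ.erase u).erase v := by
    intro e he
    obtain ⟨-, h1, h2⟩ := hfspec e he
    exact Finset.mem_erase.mpr ⟨h2, Finset.mem_erase.mpr ⟨h1, Finset.mem_univ _⟩⟩
  have hinj : Set.InjOn f ↑E' := by
    intro e1 he1 e2 he2 hfe
    by_contra hne12
    obtain ⟨hm1, hu1, hv1⟩ := hfspec e1 (Finset.mem_coe.mp he1)
    obtain ⟨hm2, -, -⟩ := hfspec e2 (Finset.mem_coe.mp he2)
    rw [← hfe] at hm2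
    obtain ⟨a, ha, he1eq⟩ := other_endpoint G e1 (f e1)
      (SimpleGraph.mem_edgeFinset.mp (Finset.mem_of_mem_erase (Finset.mem_coe.mp he1))) hm1
    obtain ⟨b, hb, he2eq⟩ := other_endpoint G e2 (f e1)
      (SimpleGraph.mem_edgeFinset.mp (Finset.mem_of_mem_erase (Finset.mem_coe.mp he2))) hm2
    have hab : a ≠ b := fun h => hne12 (by rw [he1eq, he2eq, h])
    have h2le : 2 ≤ (G.neighborSet (f e1)).ncard := by
      have hsub : {a, b} ⊆ G.neighborSet (f e1) := by
        intro z hz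
        rcases hz with rfl | hz
        · exact ha
        · rw [Set.mem_singleton_iff.mp hz]; exact hb
      calc 2 = ({a, b} : Set (Fin n)).ncard := (Set.ncard_pair hab).symm
        _ ≤ _ := Set.ncard_le_ncard hsub (Set.toFinite _)
    have := hleaf (f e1) hu1 hv1
    omega
  have hcard2 : E'.card ≤ ((Finset.univ.erase u).erase v).card :=
    Finset.card_le_card_of_injOn f hmaps hinj
  have hcard3 : ((Finset.univ.erase u).erase v).card = n - 2 := by
    rw [Finset.card_erase_of_mem (Finset.mem_erase.mpr ⟨huv.symm, Finset.mem_univ v⟩),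
      Finset.card_erase_of_mem (Finset.mem_univ u)]
    simp only [Finset.card_univ, Fintype.card_fin]
    omega
  omega


/-- Characterization of degree sequences of unicyclic graphs. -/
theorem unicyclic_degree_sequence_characterization (n : ℕ) (d : ℕ → ℕ)
    (hpos : ∀ i, i < n → 1 ≤ d i)
    (hub : ∀ i, i < n → d i ≤ n - 1)
    (hmono : ∀ i j, i ≤ j → j < n → d j ≤ d i) :
    (∃ G : SimpleGraph (Fin n),
        G.Connected ∧ G.edgeSet.ncard = n ∧ IsDegreeSequence G d) ↔
      (3 ≤ n ∧ ∑ i ∈ Finset.range n, d i = 2 * n ∧ 2 ≤ d 2) := by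
  constructor
  · rintro ⟨G, hconn, hedge, σ, hσ⟩
    exact forward d hpos hub hmono G hconn hedge σ hσ
  · rintro ⟨h3, hsum, hd2⟩
    obtain ⟨G, hconn, hdeg⟩ := construct n h3 d hpos hub hmono hsum hd2
    exact ⟨G, hconn, edge_count_of_degseq G d hdeg hsum, hdeg⟩
end

section
/- Positive integers n−1 ≥ d_1 ≥ d_2 ≥ ⋯ ≥ d_n are the vertex degree sequence of a bicyclic graph (a connected simple graph on n vertices with n+1 edges) if and only if n ≥ 4, Σ_{i=1}^n d_i = 2(n+1), and at least four of the d_i are greater than or equal to 2 (i.e. d_4 ≥ 2). -/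
lemma ncard_nbr {n : ℕ} (G : SimpleGraph (Fin n)) [DecidableRel G.Adj] (v : Fin n) :
    (G.neighborSet v).ncard = G.degree v := by
  rw [Set.ncard_eq_toFinset_card']
  simp [SimpleGraph.degree, SimpleGraph.neighborFinset]

lemma ncard_edge {n : ℕ} (G : SimpleGraph (Fin n)) [DecidableRel G.Adj] :
    G.edgeSet.ncard = G.edgeFinset.card := by
  rw [Set.ncard_eq_toFinset_card']
  exact congrArg Finset.card (by ext; simp)

lemma forward_n4 {n : ℕ} (G : SimpleGraph (Fin n)) (hconn : G.Connected)
    (hcard : G.edgeSet.ncard = n + 1) : 4 ≤ n := by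
  classical
  by_contra h
  push_neg at h
  have hne : Nonempty (Fin n) := hconn.nonempty
  have hn1 : 1 ≤ n := by
    rcases hne with ⟨v⟩; exact v.pos
  have hle : G.edgeFinset.card ≤ (Fintype.card (Fin n)).choose 2 :=
    SimpleGraph.card_edgeFinset_le_card_choose_two
  rw [Fintype.card_fin] at hle
  rw [ncard_edge] at hcard
  interval_cases n <;> revert hle <;> rw [hcard] <;> decide

lemma forward_d3 {n : ℕ} (G : SimpleGraph (Fin n)) (d : ℕ → ℕ)
    (hpos : ∀ i, i < n → 1 ≤ d i)
    (hmono : ∀ i j, i ≤ j → j < n → d j ≤ d i)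
    (hcard : G.edgeSet.ncard = n + 1)
    (hds : IsDegreeSequence G d)
    (hn : 4 ≤ n) : 2 ≤ d 3 := by
  classical
  by_contra hlt
  push_neg at hlt
  obtain ⟨σ, hσ⟩ := hds
  have hdeg : ∀ v, G.degree v = d (σ.symm v : Fin n) := fun v => by
    rw [← ncard_nbr]
    have := hσ (σ.symm v)
    simpa using this
  have hdeg1 : ∀ v : Fin n, 1 ≤ G.degree v := fun v => by
    rw [hdeg]; exact hpos _ (σ.symm v).isLt
  set S : Finset (Fin n) := Finset.univ.filter (fun v => 2 ≤ G.degree v) with hSdef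
  have hScompl : ∀ v ∈ Sᶜ, G.degree v = 1 := by
    intro v hv
    simp only [hSdef, Finset.mem_compl, Finset.mem_filter, Finset.mem_univ, true_and,
      not_le] at hv
    have := hdeg1 v
    omega
  have hcardSL : S.card + Sᶜ.card = n := by
    rw [Finset.card_add_card_compl, Fintype.card_fin]
  have hS3 : S.card ≤ 3 := by
    have h3 : (3 : ℕ) = (Finset.range 3).card := by simp
    rw [h3]
    apply Finset.card_le_card_of_injOn (fun v => ((σ.symm v : Fin n) : ℕ))
    · intro v hv
      simp only [hSdef, Finset.mem_coe, Finset.mem_filter, Finset.mem_univ, true_and] at hv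
      simp only [Finset.coe_range, Set.mem_Iio]
      by_contra hge
      push_neg at hge
      have := hmono 3 (σ.symm v : Fin n) hge (σ.symm v).isLt
      rw [hdeg] at hv
      omega
    · intro a _ b _ hab
      have : σ.symm a = σ.symm b := Fin.ext hab
      exact σ.symm.injective this
  set P : Sym2 (Fin n) → Prop := fun e => ∀ v ∈ e, 2 ≤ G.degree v with hPdef
  set ES := G.edgeFinset.filter P with hESdef
  set EL := G.edgeFinset.filter (fun e => ¬ P e) with hELdef
  have hsplit : ES.card + EL.card = G.edgeFinset.card := by
    rw [hESdef, hELdef]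
    exact Finset.card_filter_add_card_filter_not (p := P)
  -- EL bound
  have hEL : EL.card ≤ Sᶜ.card := by
    have hex : ∀ e ∈ EL, ∃ v, v ∈ e ∧ G.degree v = 1 := by
      intro e he
      simp only [hELdef, Finset.mem_filter, hPdef] at he
      push_neg at he
      obtain ⟨-, v, hv, hdv⟩ := he
      exact ⟨v, hv, by have := hdeg1 v; omega⟩
    set F : Sym2 (Fin n) → Fin n := fun e =>
      if h : ∃ v, v ∈ e ∧ G.degree v = 1 then h.choose else ⟨0, by omega⟩ with hFdef
    have hFspec : ∀ e ∈ EL, F e ∈ e ∧ G.degree (F e) = 1 := by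
      intro e he
      obtain ⟨v, hv⟩ := hex e he
      have hFe : F e = (⟨v, hv⟩ : ∃ v, v ∈ e ∧ G.degree v = 1).choose := by
        rw [hFdef]; exact dif_pos ⟨v, hv⟩
      rw [hFe]
      exact (Exists.choose_spec (⟨v, hv⟩ : ∃ v, v ∈ e ∧ G.degree v = 1))
    apply Finset.card_le_card_of_injOn F
    · intro e he
      obtain ⟨h1, h2⟩ := hFspec e he
      simp only [hSdef, Finset.mem_coe, Finset.mem_compl, Finset.mem_filter, Finset.mem_univ, true_and, not_le]
      omega
    · intro e1 he1 e2 he2 hfe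
      simp only [Finset.mem_coe] at he1 he2
      obtain ⟨h11, h12⟩ := hFspec e1 he1
      obtain ⟨h21, h22⟩ := hFspec e2 he2
      set v := F e1 with hv
      have hinc : ∀ e ∈ EL, v ∈ e → e ∈ G.incidenceFinset v := by
        intro e he hve
        rw [SimpleGraph.mem_incidenceFinset]
        refine ⟨?_, hve⟩
        have : e ∈ G.edgeFinset := Finset.mem_of_mem_filter e he
        rwa [SimpleGraph.mem_edgeFinset] at this
      have hcard1 : (G.incidenceFinset v).card = 1 := by
        rw [SimpleGraph.card_incidenceFinset_eq_degree]; omega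
      have := Finset.card_le_one.mp (le_of_eq hcard1)
      exact this e1 (hinc e1 he1 h11) e2 (hinc e2 he2 (hfe ▸ h21))
  -- ES bound
  have hES : ES.card + S.card ≤ (S.card + 1).choose 2 := by
    rw [← Finset.card_sym2 S]
    have hdisj : Disjoint ES (S.image Sym2.diag) := by
      rw [Finset.disjoint_left]
      intro e he hi
      obtain ⟨v, -, rfl⟩ := Finset.mem_image.mp hi
      have hemem : Sym2.diag v ∈ G.edgeSet := by
        have : Sym2.diag v ∈ G.edgeFinset := Finset.mem_of_mem_filter _ he
        rwa [SimpleGraph.mem_edgeFinset] at this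
      exact G.not_isDiag_of_mem_edgeSet hemem (Sym2.diag_isDiag v)
    have hsub : ES ∪ S.image Sym2.diag ⊆ S.sym2 := by
      intro e he
      rcases Finset.mem_union.mp he with he | he
      · simp only [hESdef, Finset.mem_filter, hPdef] at he
        obtain ⟨hemem, hP⟩ := he
        induction e using Sym2.ind with
        | _ a b =>
          rw [Finset.mk_mem_sym2_iff]
          constructor
          · simp only [hSdef, Finset.mem_filter, Finset.mem_univ, true_and]
            exact hP a (Sym2.mem_mk_left a b)
          · simp only [hSdef, Finset.mem_filter, Finset.mem_univ, true_and]
            exact hP b (Sym2.mem_mk_right a b)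
      · obtain ⟨v, hv, rfl⟩ := Finset.mem_image.mp he
        have : Sym2.diag v = s(v, v) := rfl
        rw [this, Finset.mk_mem_sym2_iff]
        exact ⟨hv, hv⟩
    calc ES.card + S.card = (ES ∪ S.image Sym2.diag).card := by
          rw [Finset.card_union_of_disjoint hdisj,
            Finset.card_image_of_injective _ Sym2.diag_injective]
      _ ≤ S.sym2.card := Finset.card_le_card hsub
  have hEq : G.edgeFinset.card = n + 1 := by rw [← ncard_edge]; exact hcard
  have hk3 : S.card ≤ 3 := hS3
  have hESge : S.card + 1 ≤ ES.card := by omega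
  have hfin : 2 * S.card + 1 ≤ (S.card + 1).choose 2 := by omega
  interval_cases h : S.card <;> revert hfin <;> decide

lemma sum_deg {n : ℕ} (G : SimpleGraph (Fin n)) (d : ℕ → ℕ)
    (h : IsDegreeSequence G d) :
    ∑ i ∈ Finset.range n, d i = 2 * G.edgeSet.ncard := by
  classical
  obtain ⟨σ, hσ⟩ := h
  have h1 : ∑ v : Fin n, G.degree v = 2 * G.edgeFinset.card :=
    SimpleGraph.sum_degrees_eq_twice_card_edges G
  have h2 : ∑ i ∈ Finset.range n, d i = ∑ v : Fin n, G.degree v := by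
    rw [← Fin.sum_univ_eq_sum_range]
    rw [← Equiv.sum_comp σ (fun v => G.degree v)]
    exact Finset.sum_congr rfl fun i _ => by rw [← ncard_nbr, hσ]
  rw [ncard_edge]
  omega

lemma exists_add_leaf {m : ℕ} (G : SimpleGraph (Fin m)) (w : Fin m) (hc : G.Connected) :
    ∃ G' : SimpleGraph (Fin (m+1)),
      G'.Connected ∧
      (G'.neighborSet (Fin.last m)).ncard = 1 ∧
      (∀ v : Fin m, v ≠ w → (G'.neighborSet v.castSucc).ncard = (G.neighborSet v).ncard) ∧
      (G'.neighborSet w.castSucc).ncard = (G.neighborSet w).ncard + 1 := by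
  classical
  set r : Fin (m+1) → Fin (m+1) → Prop := fun a b =>
    (∃ (ha : (a:ℕ) < m) (hb : (b:ℕ) < m), G.Adj ⟨(a:ℕ), ha⟩ ⟨(b:ℕ), hb⟩) ∨
      (a = Fin.last m ∧ b = w.castSucc) with hrdef
  set G' := SimpleGraph.fromRel r with hG'def
  have hadj : ∀ a b : Fin (m+1), G'.Adj a b ↔ a ≠ b ∧ (r a b ∨ r b a) :=
    fun a b => SimpleGraph.fromRel_adj r a b
  have hcsne : ∀ v : Fin m, v.castSucc ≠ Fin.last m := by
    intro v h
    have := Fin.ext_iff.mp h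
    simp at this
    omega
  have hcs : ∀ u v : Fin m, (G'.Adj u.castSucc v.castSucc ↔ G.Adj u v) := by
    intro u v
    rw [hadj]
    constructor
    · rintro ⟨hne, h | h⟩
      · rcases h with ⟨ha, hb, hG⟩ | ⟨h1, -⟩
        · have e1 : (⟨((u.castSucc : Fin (m+1)) : ℕ), ha⟩ : Fin m) = u := by
            apply Fin.ext; simp
          have e2 : (⟨((v.castSucc : Fin (m+1)) : ℕ), hb⟩ : Fin m) = v := by
            apply Fin.ext; simp
          rwa [e1, e2] at hG
        · exact absurd h1 (hcsne u)
      · rcases h with ⟨ha, hb, hG⟩ | ⟨h1, -⟩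
        · have e1 : (⟨((u.castSucc : Fin (m+1)) : ℕ), hb⟩ : Fin m) = u := by
            apply Fin.ext; simp
          have e2 : (⟨((v.castSucc : Fin (m+1)) : ℕ), ha⟩ : Fin m) = v := by
            apply Fin.ext; simp
          rw [e1, e2] at hG
          exact hG.symm
        · exact absurd h1 (hcsne v)
    · intro hG
      refine ⟨fun h => G.ne_of_adj hG (Fin.castSucc_injective m h), Or.inl (Or.inl ?_)⟩
      refine ⟨by simp [u.isLt], by simp [v.isLt], ?_⟩
      have e1 : (⟨((u.castSucc : Fin (m+1)) : ℕ), by simp [u.isLt]⟩ : Fin m) = u := by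
        apply Fin.ext; simp
      have e2 : (⟨((v.castSucc : Fin (m+1)) : ℕ), by simp [v.isLt]⟩ : Fin m) = v := by
        apply Fin.ext; simp
      rw [e1, e2]
      exact hG
  have hadj_last : ∀ v : Fin m, (G'.Adj v.castSucc (Fin.last m) ↔ v = w) := by
    intro v
    rw [hadj]
    constructor
    · rintro ⟨hne, h | h⟩
      · rcases h with ⟨-, hb, -⟩ | ⟨h1, -⟩
        · simp at hb
        · exact absurd h1 (hcsne v)
      · rcases h with ⟨ha, -, -⟩ | ⟨-, h2⟩
        · simp at ha
        · exact Fin.castSucc_injective m h2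
    · intro h
      subst h
      exact ⟨hcsne v, Or.inr (Or.inr ⟨rfl, rfl⟩)⟩
  have hlast_nbr : G'.neighborSet (Fin.last m) = {w.castSucc} := by
    ext x
    simp only [SimpleGraph.mem_neighborSet, Set.mem_singleton_iff]
    induction x using Fin.lastCases with
    | last =>
      simp only [SimpleGraph.irrefl, false_iff]
      exact fun h => (hcsne w) h.symm
    | cast u =>
      rw [SimpleGraph.adj_comm, hadj_last u]
      constructor
      · rintro rfl; rfl
      · intro h; exact Fin.castSucc_injective m h ▸ rfl
  have hcs_nbr : ∀ v : Fin m, G'.neighborSet v.castSucc =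
      Fin.castSucc '' (G.neighborSet v) ∪ (if v = w then {Fin.last m} else ∅) := by
    intro v
    ext x
    simp only [SimpleGraph.mem_neighborSet, Set.mem_union, Set.mem_image]
    induction x using Fin.lastCases with
    | last =>
      rw [hadj_last v]
      constructor
      · rintro rfl
        right; simp
      · rintro (⟨u, -, hu⟩ | h)
        · exact absurd hu (hcsne u)
        · by_cases hvw : v = w
          · exact hvw
          · simp [hvw] at h
    | cast u =>
      rw [hcs v u]
      constructor
      · intro h
        left
        exact ⟨u, h, rfl⟩
      · rintro (⟨u', hu', he⟩ | h)
        · rwa [← Fin.castSucc_injective m he]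
        · by_cases hvw : v = w
          · simp [hvw] at h
          · simp [hvw] at h
  -- connectivity
  have hreach : ∀ x : Fin (m+1), G'.Reachable w.castSucc x := by
    intro x
    induction x using Fin.lastCases with
    | last => exact ((hadj_last w).mpr rfl).reachable
    | cast u =>
      exact (hc.preconnected w u).map ⟨Fin.castSucc, fun hab => (hcs _ _).mpr hab⟩
  have hconn : G'.Connected := by
    rw [SimpleGraph.connected_iff]
    exact ⟨fun x y => (hreach x).symm.trans (hreach y), ⟨Fin.last m⟩⟩
  refine ⟨G', hconn, ?_, ?_, ?_⟩
  · rw [hlast_nbr]; exact Set.ncard_singleton _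
  · intro v hvw
    rw [hcs_nbr v, if_neg hvw, Set.union_empty,
      Set.ncard_image_of_injective _ (Fin.castSucc_injective m)]
  · rw [hcs_nbr w, if_pos rfl, Set.union_singleton,
      Set.ncard_insert_of_notMem (by rintro ⟨u, -, hu⟩; exact (hcsne u) hu),
      Set.ncard_image_of_injective _ (Fin.castSucc_injective m)]

lemma graph1 {n : ℕ} (hn : 4 ≤ n) :
    ∃ G : SimpleGraph (Fin n), G.Connected ∧
      ∀ v : Fin n, (G.neighborSet v).ncard = if (v:ℕ) = 0 ∨ (v:ℕ) = 2 then 3 else 2 := by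
  classical
  set r : Fin n → Fin n → Prop := fun a b =>
    (b:ℕ) = (a:ℕ) + 1 ∨ ((a:ℕ) = n - 1 ∧ (b:ℕ) = 0) ∨ ((a:ℕ) = 0 ∧ (b:ℕ) = 2) with hrdef
  set G := SimpleGraph.fromRel r with hGdef
  have hadj : ∀ a b : Fin n, G.Adj a b ↔ a ≠ b ∧ (r a b ∨ r b a) :=
    fun a b => SimpleGraph.fromRel_adj r a b
  refine ⟨G, ?_, ?_⟩
  · -- connected
    have key : ∀ k (hk : k < n), G.Reachable ⟨0, by omega⟩ ⟨k, hk⟩ := by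
      intro k
      induction k with
      | zero => intro hk; exact SimpleGraph.Reachable.refl _
      | succ k ihk =>
        intro hk
        have hk' : k < n := by omega
        refine (ihk hk').trans (SimpleGraph.Adj.reachable ?_)
        rw [hadj]
        constructor
        · intro h
          have := Fin.ext_iff.mp h
          simp at this
        · left; left; simp
    rw [SimpleGraph.connected_iff]
    refine ⟨fun u v => ?_, ⟨⟨0, by omega⟩⟩⟩
    have hu := key (u:ℕ) u.isLt
    have hv := key (v:ℕ) v.isLt
    simp only [Fin.eta] at hu hv
    exact hu.symm.trans hv
  · intro v
    by_cases h0 : (v:ℕ) = 0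
    · have hset : G.neighborSet v =
          {(⟨1, by omega⟩ : Fin n), ⟨2, by omega⟩, ⟨n-1, by omega⟩} := by
        ext x
        have hx := x.isLt
        have hv := v.isLt
        simp only [SimpleGraph.mem_neighborSet, hadj, hrdef, ne_eq, Set.mem_insert_iff,
          Set.mem_singleton_iff, Fin.ext_iff]
        omega
      rw [hset, if_pos (Or.inl h0)]
      rw [Set.ncard_insert_of_notMem (by simp only [Set.mem_insert_iff, Set.mem_singleton_iff, ne_eq, Fin.mk.injEq]; omega),
        Set.ncard_pair (by simp only [Set.mem_insert_iff, Set.mem_singleton_iff, ne_eq, Fin.mk.injEq]; omega)]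
    · by_cases h2 : (v:ℕ) = 2
      · have hset : G.neighborSet v =
            {(⟨0, by omega⟩ : Fin n), ⟨1, by omega⟩, ⟨3, by omega⟩} := by
          ext x
          have hx := x.isLt
          have hv := v.isLt
          simp only [SimpleGraph.mem_neighborSet, hadj, hrdef, ne_eq, Set.mem_insert_iff,
            Set.mem_singleton_iff, Fin.ext_iff]
          omega
        rw [hset, if_pos (Or.inr h2)]
        rw [Set.ncard_insert_of_notMem (by simp only [Set.mem_insert_iff, Set.mem_singleton_iff, ne_eq, Fin.mk.injEq]; omega),
          Set.ncard_pair (by simp only [Set.mem_insert_iff, Set.mem_singleton_iff, ne_eq, Fin.mk.injEq]; omega)]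
      · by_cases hl : (v:ℕ) = n - 1
        · have hset : G.neighborSet v =
              {(⟨n-2, by omega⟩ : Fin n), ⟨0, by omega⟩} := by
            ext x
            have hx := x.isLt
            have hv := v.isLt
            simp only [SimpleGraph.mem_neighborSet, hadj, hrdef, ne_eq, Set.mem_insert_iff,
              Set.mem_singleton_iff, Fin.ext_iff]
            omega
          rw [hset, if_neg (by omega), Set.ncard_pair (by simp only [Set.mem_insert_iff, Set.mem_singleton_iff, ne_eq, Fin.mk.injEq]; omega)]
        · have hset : G.neighborSet v =
              {(⟨(v:ℕ)-1, by omega⟩ : Fin n), ⟨(v:ℕ)+1, by have := v.isLt; omega⟩} := by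
            ext x
            have hx := x.isLt
            have hv := v.isLt
            simp only [SimpleGraph.mem_neighborSet, hadj, hrdef, ne_eq, Set.mem_insert_iff,
              Set.mem_singleton_iff, Fin.ext_iff]
            omega
          rw [hset, if_neg (by omega),
            Set.ncard_pair (by simp only [Set.mem_insert_iff, Set.mem_singleton_iff, ne_eq, Fin.mk.injEq]; have := v.isLt; omega)]

lemma graph2 {n : ℕ} (hn : 5 ≤ n) :
    ∃ G : SimpleGraph (Fin n), G.Connected ∧
      ∀ v : Fin n, (G.neighborSet v).ncard = if (v:ℕ) = 0 then 4 else 2 := by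
  classical
  set r : Fin n → Fin n → Prop := fun a b =>
    ((b:ℕ) = (a:ℕ) + 1 ∧ (a:ℕ) ≠ 2) ∨ ((a:ℕ) = n - 1 ∧ (b:ℕ) = 0) ∨
      ((a:ℕ) = 0 ∧ ((b:ℕ) = 2 ∨ (b:ℕ) = 3)) with hrdef
  set G := SimpleGraph.fromRel r with hGdef
  have hadj : ∀ a b : Fin n, G.Adj a b ↔ a ≠ b ∧ (r a b ∨ r b a) :=
    fun a b => SimpleGraph.fromRel_adj r a b
  refine ⟨G, ?_, ?_⟩
  · have h03 : G.Adj ⟨0, by omega⟩ ⟨3, by omega⟩ := by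
      rw [hadj]
      constructor
      · intro h; have := Fin.ext_iff.mp h; simp at this
      · left; right; right; simp
    have key : ∀ k (hk : k < n), G.Reachable ⟨0, by omega⟩ ⟨k, hk⟩ := by
      intro k
      induction k with
      | zero => intro hk; exact SimpleGraph.Reachable.refl _
      | succ k ihk =>
        intro hk
        have hk' : k < n := by omega
        by_cases hk2 : k = 2
        · subst hk2
          exact h03.reachable
        · refine (ihk hk').trans (SimpleGraph.Adj.reachable ?_)
          rw [hadj]
          constructor
          · intro h
            have := Fin.ext_iff.mp h
            simp at this
          · left; left; simp [hk2]
    rw [SimpleGraph.connected_iff]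
    refine ⟨fun u v => ?_, ⟨⟨0, by omega⟩⟩⟩
    have hu := key (u:ℕ) u.isLt
    have hv := key (v:ℕ) v.isLt
    simp only [Fin.eta] at hu hv
    exact hu.symm.trans hv
  · intro v
    have hvlt := v.isLt
    by_cases h0 : (v:ℕ) = 0
    · have hset : G.neighborSet v =
          {(⟨1, by omega⟩ : Fin n), ⟨2, by omega⟩, ⟨3, by omega⟩, ⟨n-1, by omega⟩} := by
        ext x
        have hx := x.isLt
        simp only [SimpleGraph.mem_neighborSet, hadj, hrdef, ne_eq, Set.mem_insert_iff,
          Set.mem_singleton_iff, Fin.ext_iff]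
        omega
      rw [hset, if_pos h0]
      rw [Set.ncard_insert_of_notMem
          (by simp only [Set.mem_insert_iff, Set.mem_singleton_iff, Fin.mk.injEq]; omega),
        Set.ncard_insert_of_notMem
          (by simp only [Set.mem_insert_iff, Set.mem_singleton_iff, Fin.mk.injEq]; omega),
        Set.ncard_pair
          (by simp only [ne_eq, Fin.mk.injEq]; omega)]
    · by_cases hl : (v:ℕ) = n - 1
      · have hset : G.neighborSet v = {(⟨n-2, by omega⟩ : Fin n), ⟨0, by omega⟩} := by
          ext x
          have hx := x.isLt
          simp only [SimpleGraph.mem_neighborSet, hadj, hrdef, ne_eq, Set.mem_insert_iff,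
            Set.mem_singleton_iff, Fin.ext_iff]
          omega
        rw [hset, if_neg h0,
          Set.ncard_pair (by simp only [ne_eq, Fin.mk.injEq]; omega)]
      · by_cases h1 : (v:ℕ) = 1
        · have hset : G.neighborSet v = {(⟨0, by omega⟩ : Fin n), ⟨2, by omega⟩} := by
            ext x
            have hx := x.isLt
            simp only [SimpleGraph.mem_neighborSet, hadj, hrdef, ne_eq, Set.mem_insert_iff,
              Set.mem_singleton_iff, Fin.ext_iff]
            omega
          rw [hset, if_neg h0,
            Set.ncard_pair (by simp only [ne_eq, Fin.mk.injEq]; omega)]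
        · by_cases h2 : (v:ℕ) = 2
          · have hset : G.neighborSet v = {(⟨0, by omega⟩ : Fin n), ⟨1, by omega⟩} := by
              ext x
              have hx := x.isLt
              simp only [SimpleGraph.mem_neighborSet, hadj, hrdef, ne_eq, Set.mem_insert_iff,
                Set.mem_singleton_iff, Fin.ext_iff]
              omega
            rw [hset, if_neg h0,
              Set.ncard_pair (by simp only [ne_eq, Fin.mk.injEq]; omega)]
          · by_cases h3 : (v:ℕ) = 3
            · have hset : G.neighborSet v = {(⟨0, by omega⟩ : Fin n), ⟨4, by omega⟩} := by
                ext x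
                have hx := x.isLt
                simp only [SimpleGraph.mem_neighborSet, hadj, hrdef, ne_eq, Set.mem_insert_iff,
                  Set.mem_singleton_iff, Fin.ext_iff]
                omega
              rw [hset, if_neg h0,
                Set.ncard_pair (by simp only [ne_eq, Fin.mk.injEq]; omega)]
            · have hset : G.neighborSet v =
                  {(⟨(v:ℕ)-1, by omega⟩ : Fin n), ⟨(v:ℕ)+1, by omega⟩} := by
                ext x
                have hx := x.isLt
                simp only [SimpleGraph.mem_neighborSet, hadj, hrdef, ne_eq, Set.mem_insert_iff,
                  Set.mem_singleton_iff, Fin.ext_iff]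
                omega
              rw [hset, if_neg h0,
                Set.ncard_pair (by simp only [ne_eq, Fin.mk.injEq]; omega)]

lemma realize : ∀ n : ℕ, ∀ d : ℕ → ℕ,
    (∀ i, i < n → 1 ≤ d i) → (∀ i, i < n → d i ≤ n - 1) →
    (∀ i j, i ≤ j → j < n → d j ≤ d i) → 4 ≤ n →
    (∑ i ∈ Finset.range n, d i = 2 * (n + 1)) → 2 ≤ d 3 →
    ∃ G : SimpleGraph (Fin n), G.Connected ∧ IsDegreeSequence G d := by
  intro n
  induction n using Nat.strong_induction_on with
  | _ n ih =>
  intro d hpos hub hmono hn hsum hd3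
  classical
  have hsum4 : ∑ i ∈ Finset.range 4, d i = d 0 + d 1 + d 2 + d 3 := by
    simp [Finset.sum_range_succ]
  have hlow : d 0 + d 1 + d 2 + d 3 + (n - 4) * 1 ≤ ∑ i ∈ Finset.range n, d i := by
    rw [← Finset.sum_range_add_sum_Ico d hn, hsum4]
    have h2 : (Finset.Ico 4 n).card • 1 ≤ ∑ i ∈ Finset.Ico 4 n, d i :=
      Finset.card_nsmul_le_sum _ _ _ (fun i hi => hpos i (Finset.mem_Ico.mp hi).2)
    rw [Nat.card_Ico, smul_eq_mul] at h2
    omega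
  by_cases hone : d (n-1) = 1
  · -- leaf case
    have hn5 : 5 ≤ n := by
      rcases Nat.lt_or_ge n 5 with h | h
      · have : n - 1 = 3 := by omega
        rw [this] at hone; omega
      · exact h
    have hd0 : 3 ≤ d 0 := by
      by_contra hlt
      push_neg at hlt
      have hle : ∑ i ∈ Finset.range (n-1), d i ≤ (n-1) * 2 := by
        have := Finset.sum_le_card_nsmul (Finset.range (n-1)) d 2
          (fun i hi => by
            have hi' := Finset.mem_range.mp hi
            have := hmono 0 i (Nat.zero_le i) (by omega)
            omega)
        simpa using this
      have hEq : ∑ i ∈ Finset.range n, d i = ∑ i ∈ Finset.range (n-1), d i + d (n-1) := by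
        have h1 : n = (n-1) + 1 := by omega
        rw [h1, Finset.sum_range_succ]
        congr 1 <;> omega
      omega
    -- greatest index with value d 0
    obtain ⟨j, hj_le, hjspec, hjgt⟩ :
        ∃ j, j ≤ n - 2 ∧ d j = d 0 ∧ ∀ i, j < i → i ≤ n-2 → d i ≠ d 0 :=
      ⟨Nat.findGreatest (fun i => d i = d 0) (n-2), Nat.findGreatest_le _,
        Nat.findGreatest_spec (P := fun i => d i = d 0) (m := 0) (by omega) rfl,
        fun i h1 h2 => Nat.findGreatest_is_greatest (P := fun i => d i = d 0) h1 h2⟩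
    have hjlt : ∀ i, j < i → i < n → d i < d 0 := by
      intro i h1 h2
      rcases Nat.lt_or_ge i (n-1) with h | h
      · have hne := hjgt i h1 (by omega)
        have := hmono 0 i (Nat.zero_le i) h2
        omega
      · have : i = n - 1 := by omega
        rw [this, hone]; omega
    -- no two entries equal to n-1 besides possibility j = 0
    have hub' : ∀ i, i < n - 1 → i ≠ j → d i ≤ n - 2 := by
      intro i hi hij
      by_contra hgt
      push_neg at hgt
      have hdi : d i = n - 1 := by
        have := hub i (by omega); omega
      rcases Nat.lt_or_ge j i with h | h
      · refine absurd hdi ?_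
        have h1 := hjlt i h (by omega)
        have h2 := hub 0 (by omega)
        omega
      · -- i < j, both d i and d j = d 0 = n - 1, so d 1 = n - 1
        have hij' : i < j := by omega
        have hd0n : d 0 = n - 1 := by
          have h1 := hmono 0 i (Nat.zero_le i) (by omega)
          have h2 := hub 0 (by omega)
          omega
        have hd1 : d 1 = n - 1 := by
          have h1 := hmono 1 j (by omega) (by omega)
          have h2 := hmono 0 1 (by omega) (by omega)
          omega
        have h2' : 2 ≤ d 2 := by
          have := hmono 2 3 (by omega) (by omega); omega
        have h1' : 1 ≤ d 1 := hpos 1 (by omega)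
        omega
    -- build d'
    obtain ⟨m, rfl⟩ : ∃ m, n = m + 1 := ⟨n - 1, by omega⟩
    have honem : d m = 1 := by
      have he : m + 1 - 1 = m := by omega
      rwa [he] at hone
    set d' := Function.update d j (d 0 - 1) with hd'def
    have hd'j : d' j = d 0 - 1 := by simp [hd'def]
    have hd'ne : ∀ i, i ≠ j → d' i = d i := by
      intro i h; simp [hd'def, Function.update_of_ne h]
    have hd'sum : ∑ i ∈ Finset.range m, d' i = 2 * (m + 1) := by
      have hjmem : j ∈ Finset.range m := Finset.mem_range.mpr (by omega)
      rw [hd'def, Finset.sum_update_of_mem hjmem, ← Finset.erase_eq]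
      have herase : d j + ∑ i ∈ (Finset.range m).erase j, d i = ∑ i ∈ Finset.range m, d i :=
        Finset.add_sum_erase _ d hjmem
      have htot : ∑ i ∈ Finset.range (m+1), d i = ∑ i ∈ Finset.range m, d i + d m := by
        rw [Finset.sum_range_succ]
      omega
    have hd'pos : ∀ i, i < m → 1 ≤ d' i := by
      intro i hi
      by_cases h : i = j
      · rw [h, hd'j]; omega
      · rw [hd'ne i h]; exact hpos i (by omega)
    have hd'ub : ∀ i, i < m → d' i ≤ m - 1 := by
      intro i hi
      by_cases h : i = j
      · rw [h, hd'j]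
        have := hub 0 (by omega)
        omega
      · rw [hd'ne i h]
        have := hub' i (by omega) h
        omega
    have hd'mono : ∀ i k, i ≤ k → k < m → d' k ≤ d' i := by
      intro i k hik hk
      by_cases hkj : k = j
      · rw [hkj, hd'j]
        by_cases hij : i = j
        · rw [hij, hd'j]
        · rw [hd'ne i hij]
          have h1 : i < j := by omega
          have h2 := hmono i j (by omega) (by omega)
          omega
      · rw [hd'ne k hkj]
        by_cases hij : i = j
        · rw [hij, hd'j]
          have h1 : j < k := by omega
          have h2 := hjlt k h1 (by omega)
          omega
        · rw [hd'ne i hij]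
          exact hmono i k hik (by omega)
    have hd'3 : 2 ≤ d' 3 := by
      by_cases h : (3:ℕ) = j
      · rw [h, hd'j]; omega
      · rw [hd'ne 3 h]; exact hd3
    obtain ⟨G, hGconn, σ', hσ'⟩ :=
      ih m (by omega) d' hd'pos hd'ub hd'mono (by omega) hd'sum hd'3
    have hjm : j < m := by omega
    set w := σ' ⟨j, hjm⟩ with hwdef
    obtain ⟨G', hG'conn, hlast, hother, hw⟩ := exists_add_leaf G w hGconn
    refine ⟨G', hG'conn, ?_⟩
    refine ⟨finSuccEquivLast.symm.permCongr (Equiv.optionCongr σ'), ?_⟩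
    intro i
    induction i using Fin.lastCases with
    | last =>
      have hσlast : (finSuccEquivLast.symm.permCongr (Equiv.optionCongr σ')) (Fin.last m) =
          Fin.last m := by
        simp [Equiv.permCongr_apply]
      rw [hσlast, hlast]
      simp [honem]
    | cast i =>
      have hσcast : (finSuccEquivLast.symm.permCongr (Equiv.optionCongr σ')) i.castSucc =
          (σ' i).castSucc := by
        simp [Equiv.permCongr_apply]
      rw [hσcast, Fin.coe_castSucc]
      by_cases hij : i = ⟨j, hjm⟩
      · subst hij
        rw [← hwdef, hw, hσ' ⟨j, hjm⟩]
        have : d' j = d 0 - 1 := hd'j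
        simp only [this]
        have : d j = d 0 := hjspec
        omega
      · have hne : σ' i ≠ w := fun h => hij (σ'.injective h)
        rw [hother (σ' i) hne, hσ' i, hd'ne i (fun h => hij (Fin.ext h))]
  · -- min degree 2 case
    have h2all : ∀ i, i < n → 2 ≤ d i := by
      intro i hi
      have h1 := hmono i (n-1) (by omega) (by omega)
      have h2 := hpos (n-1) (by omega)
      omega
    by_cases hd1 : d 1 ≤ 2
    · -- degree sequence (4,2,...,2)
      have h2eq : ∀ i, 1 ≤ i → i < n → d i = 2 := by
        intro i h1 hi
        have := hmono 1 i h1 hi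
        have := h2all i hi
        omega
      have hIco : ∑ i ∈ Finset.Ico 1 n, d i = (n-1) * 2 := by
        rw [Finset.sum_congr rfl (fun i hi => h2eq i (Finset.mem_Ico.mp hi).1
          (Finset.mem_Ico.mp hi).2)]
        simp [Nat.card_Ico, mul_comm]
      have hd0 : d 0 = 4 := by
        have h1 : ∑ i ∈ Finset.range 1, d i + ∑ i ∈ Finset.Ico 1 n, d i
            = ∑ i ∈ Finset.range n, d i := Finset.sum_range_add_sum_Ico d (by omega)
        simp only [Finset.sum_range_one] at h1
        omega
      have hn5 : 5 ≤ n := by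
        have := hub 0 (by omega); omega
      obtain ⟨G, hGconn, hdeg⟩ := graph2 (n := n) hn5
      refine ⟨G, hGconn, Equiv.refl _, fun i => ?_⟩
      rw [Equiv.refl_apply, hdeg i]
      by_cases h : (i:ℕ) = 0
      · rw [if_pos h, h, hd0]
      · rw [if_neg h, h2eq (i:ℕ) (by omega) i.isLt]
    · -- degree sequence (3,3,2,...,2)
      push_neg at hd1
      have hd1' : d 1 = 3 := by
        by_contra h
        have h4 : 4 ≤ d 1 := by omega
        have h40 : 4 ≤ d 0 := le_trans h4 (hmono 0 1 (by omega) (by omega))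
        have h22 := h2all 2 (by omega)
        have h23 := h2all 3 (by omega)
        have hIco : (n - 4) * 2 ≤ ∑ i ∈ Finset.Ico 4 n, d i := by
          have := Finset.card_nsmul_le_sum (Finset.Ico 4 n) d 2
            (fun i hi => h2all i (Finset.mem_Ico.mp hi).2)
          rw [Nat.card_Ico, smul_eq_mul] at this
          exact this
        have h1 : ∑ i ∈ Finset.range 4, d i + ∑ i ∈ Finset.Ico 4 n, d i
            = ∑ i ∈ Finset.range n, d i := Finset.sum_range_add_sum_Ico d hn
        omega
      have hd0' : d 0 = 3 := by
        by_contra h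
        have h4 : 4 ≤ d 0 := by
          have := hmono 0 1 (by omega) (by omega); omega
        have h22 := h2all 2 (by omega)
        have h23 := h2all 3 (by omega)
        have hIco : (n - 4) * 2 ≤ ∑ i ∈ Finset.Ico 4 n, d i := by
          have := Finset.card_nsmul_le_sum (Finset.Ico 4 n) d 2
            (fun i hi => h2all i (Finset.mem_Ico.mp hi).2)
          rw [Nat.card_Ico, smul_eq_mul] at this
          exact this
        have h1 : ∑ i ∈ Finset.range 4, d i + ∑ i ∈ Finset.Ico 4 n, d i
            = ∑ i ∈ Finset.range n, d i := Finset.sum_range_add_sum_Ico d hn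
        omega
      have h2eq : ∀ i, 2 ≤ i → i < n → d i = 2 := by
        intro i h2i hi
        by_contra hne
        have h3i : 3 ≤ d i := by have := h2all i hi; omega
        have hIco : ∑ i ∈ Finset.Ico 2 n, d i = 2 * (n - 2) := by
          have h1 : ∑ i ∈ Finset.range 2, d i + ∑ i ∈ Finset.Ico 2 n, d i
              = ∑ i ∈ Finset.range n, d i := Finset.sum_range_add_sum_Ico d (by omega)
          have h2 : ∑ i ∈ Finset.range 2, d i = d 0 + d 1 := by
            simp [Finset.sum_range_succ]
          omega
        have hlt : ∑ i ∈ Finset.Ico 2 n, (fun _ => 2) i < ∑ i ∈ Finset.Ico 2 n, d i := by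
          apply Finset.sum_lt_sum (fun k hk => h2all k (Finset.mem_Ico.mp hk).2)
          exact ⟨i, Finset.mem_Ico.mpr ⟨h2i, hi⟩, by omega⟩
        simp only [Finset.sum_const, Nat.card_Ico, smul_eq_mul] at hlt
        omega
      obtain ⟨G, hGconn, hdeg⟩ := graph1 (n := n) hn
      have h1n : (1:ℕ) < n := by omega
      have h2n : (2:ℕ) < n := by omega
      refine ⟨G, hGconn, Equiv.swap ⟨1, h1n⟩ ⟨2, h2n⟩, fun i => ?_⟩
      by_cases hi1 : i = ⟨1, h1n⟩
      · subst hi1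
        rw [Equiv.swap_apply_left, hdeg]
        simp [hd1']
      · by_cases hi2 : i = ⟨2, h2n⟩
        · subst hi2
          rw [Equiv.swap_apply_right, hdeg]
          simp [h2eq 2 (by omega) h2n]
        · rw [Equiv.swap_apply_of_ne_of_ne hi1 hi2, hdeg]
          by_cases h0 : (i:ℕ) = 0
          · rw [if_pos (Or.inl h0), h0, hd0']
          · have hine2 : (i:ℕ) ≠ 2 := fun h => hi2 (Fin.ext h)
            have hine1 : (i:ℕ) ≠ 1 := fun h => hi1 (Fin.ext h)
            rw [if_neg (by omega), h2eq (i:ℕ) (by omega) i.isLt]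

/-- Characterization of degree sequences of bicyclic graphs. -/
theorem bicyclic_degree_sequence_characterization (n : ℕ) (d : ℕ → ℕ)
    (hpos : ∀ i, i < n → 1 ≤ d i)
    (hub : ∀ i, i < n → d i ≤ n - 1)
    (hmono : ∀ i j, i ≤ j → j < n → d j ≤ d i) :
    (∃ G : SimpleGraph (Fin n),
        G.Connected ∧ G.edgeSet.ncard = n + 1 ∧ IsDegreeSequence G d) ↔
      (4 ≤ n ∧ ∑ i ∈ Finset.range n, d i = 2 * (n + 1) ∧ 2 ≤ d 3) := by
  constructor
  · rintro ⟨G, hconn, hcard, hds⟩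
    have hsum : ∑ i ∈ Finset.range n, d i = 2 * (n + 1) := by
      have := sum_deg G d hds
      rw [hcard] at this
      exact this
    have hn := forward_n4 G hconn hcard
    exact ⟨hn, hsum, forward_d3 G d hpos hmono hcard hds hn⟩
  · rintro ⟨hn, hsum, hd3⟩
    obtain ⟨G, hconn, hds⟩ := realize n d hpos hub hmono hn hsum hd3
    refine ⟨G, hconn, ?_, hds⟩
    have := sum_deg G d hds
    omega
end

section
/- Let G be a unicyclic graph (a connected simple graph on n ≥ 3 vertices with n edges) with degree sequence d_1 ≥ d_2 ≥ ⋯ ≥ d_n. Then the constant vector (2, 2, …, 2) ∈ ℝ^n is majorized by (d_1, …, d_n), and (d_1, …, d_n) is majorized by the vector (n−1, 2, 2, 1, …, 1) (with n−3 trailing ones); i.e. 2k ≤ Σ_{i=1}^k d_i for every k = 1, …, n, and Σ_{i=1}^k d_i ≤ Σ_{i=1}^k x*_i for every k = 1, …, n, where x* = (n−1, 2, 2, 1^{n−3}). -/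
/-- If `G` is a unicyclic graph on `n ≥ 3` vertices with nonincreasing degree
sequence `d`, then `(2, …, 2) ⊴ d ⊴ (n-1, 2, 2, 1^{n-3})` in the sense of
partial sums.  (0-indexed.) -/
theorem unicyclic_extremal_degree_sequences (n : ℕ) (hn : 3 ≤ n)
    (G : SimpleGraph (Fin n)) (hconn : G.Connected)
    (hedges : G.edgeSet.ncard = n)
    (d : ℕ → ℕ) (hmono : ∀ i j, i ≤ j → j < n → d j ≤ d i)
    (hdeg : ∃ σ : Equiv.Perm (Fin n),
        ∀ i : Fin n, (G.neighborSet (σ i)).ncard = d (i : ℕ)) :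
    (∀ k, 1 ≤ k → k ≤ n → 2 * k ≤ ∑ i ∈ Finset.range k, d i) ∧
    (∀ k, 1 ≤ k → k ≤ n →
      ∑ i ∈ Finset.range k, d i ≤
        ∑ i ∈ Finset.range k,
          (if i = 0 then n - 1 else if i < 3 then 2 else 1)) := by
  letI : DecidableRel G.Adj := Classical.decRel _
  obtain ⟨σ, hσ⟩ := hdeg
  have hd : ∀ i : Fin n, d (i : ℕ) = G.degree (σ i) := by
    intro i
    rw [← hσ i, SimpleGraph.degree, SimpleGraph.neighborFinset,
      Set.ncard_eq_toFinset_card']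
  -- total degree sum
  have hcard : G.edgeFinset.card = n := by
    rwa [SimpleGraph.edgeFinset, ← Set.ncard_eq_toFinset_card']
  have hsum : ∑ i ∈ Finset.range n, d i = 2 * n := by
    rw [← Fin.sum_univ_eq_sum_range]
    calc ∑ i : Fin n, d (i : ℕ) = ∑ i : Fin n, G.degree (σ i) := by
          simp [hd]
      _ = ∑ v : Fin n, G.degree v := Equiv.sum_comp σ (fun v => G.degree v)
      _ = 2 * G.edgeFinset.card := G.sum_degrees_eq_twice_card_edges
      _ = 2 * n := by rw [hcard]
  -- every degree positive
  have hpos : ∀ i, i < n → 1 ≤ d i := by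
    intro i hi
    have := hd ⟨i, hi⟩
    simp only [Fin.val_mk] at this
    rw [this, Nat.one_le_iff_ne_zero, ← Nat.pos_iff_ne_zero,
      G.degree_pos_iff_exists_adj]
    set v := σ ⟨i, hi⟩
    obtain ⟨w, hw⟩ := Fintype.exists_ne_of_one_lt_card (by simp; omega) v
    obtain ⟨p⟩ := hconn v w
    cases p with
    | nil => exact absurd rfl hw
    | cons h _ => exact ⟨_, h⟩
  -- d 0 ≤ n - 1
  have hd0 : d 0 ≤ n - 1 := by
    have := hd ⟨0, by omega⟩
    simp only [Fin.val_mk] at this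
    have h2 := G.degree_lt_card_verts (σ ⟨0, by omega⟩)
    rw [Fintype.card_fin] at h2
    omega
  -- d 0 + d 1 ≤ n + 1
  have hd01 : d 0 + d 1 ≤ n + 1 := by
    have hi0 : 0 < n := by omega
    have hi1 : 1 < n := by omega
    set u := σ ⟨0, hi0⟩ with hu
    set v := σ ⟨1, hi1⟩ with hv
    have huv : u ≠ v := by
      intro h
      have h2 : (⟨0, hi0⟩ : Fin n) = ⟨1, hi1⟩ := σ.injective h
      exact absurd (congrArg Fin.val h2) (by simp)
    have h0 : d 0 = G.degree u := hd ⟨0, hi0⟩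
    have h1 : d 1 = G.degree v := hd ⟨1, hi1⟩
    have e1 : (G.incidenceFinset u).card = G.degree u :=
      G.card_incidenceFinset_eq_degree u
    have e2 : (G.incidenceFinset v).card = G.degree v :=
      G.card_incidenceFinset_eq_degree v
    have hun : (G.incidenceFinset u ∪ G.incidenceFinset v).card ≤ n := by
      refine le_trans (Finset.card_le_card ?_) (le_of_eq hcard)
      intro e he
      rw [Finset.mem_union, SimpleGraph.mem_incidenceFinset,
        SimpleGraph.mem_incidenceFinset] at he
      rw [SimpleGraph.mem_edgeFinset]
      rcases he with he | he
      · exact he.1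
      · exact he.1
    have hint : (G.incidenceFinset u ∩ G.incidenceFinset v).card ≤ 1 := by
      have hs : G.incidenceFinset u ∩ G.incidenceFinset v ⊆ {s(u, v)} := by
        intro e he
        rw [Finset.mem_inter, SimpleGraph.mem_incidenceFinset,
          SimpleGraph.mem_incidenceFinset] at he
        have := G.incidenceSet_inter_incidenceSet_subset huv ⟨he.1, he.2⟩
        simpa using this
      calc _ ≤ ({s(u,v)} : Finset (Sym2 (Fin n))).card := Finset.card_le_card hs
        _ = 1 := Finset.card_singleton _
    have := Finset.card_union_add_card_inter (G.incidenceFinset u)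
      (G.incidenceFinset v)
    omega
  constructor
  · -- lower bound
    intro k hk1 hkn
    have hsplit : ∑ i ∈ Finset.range k, d i + ∑ i ∈ Finset.Ico k n, d i
        = 2 * n := by
      rw [Finset.range_eq_Ico, Finset.sum_Ico_consecutive _ (Nat.zero_le k) hkn,
        ← Finset.range_eq_Ico, hsum]
    set S := ∑ i ∈ Finset.range k, d i with hS
    set T := ∑ i ∈ Finset.Ico k n, d i with hT
    have hSk : k * d (k - 1) ≤ S := by
      have := Finset.card_nsmul_le_sum (Finset.range k) d (d (k - 1)) ?_
      · simpa [smul_eq_mul] using this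
      · intro i hi
        rw [Finset.mem_range] at hi
        exact hmono i (k - 1) (by omega) (by omega)
    have hTk : T ≤ (n - k) * d (k - 1) := by
      have := Finset.sum_le_card_nsmul (Finset.Ico k n) d (d (k - 1)) ?_
      · simpa [smul_eq_mul, Nat.card_Ico] using this
      · intro i hi
        rw [Finset.mem_Ico] at hi
        exact hmono (k - 1) i (by omega) hi.2
    have key : n * (2 * k) ≤ n * S := by
      calc n * (2 * k) = k * (2 * n) := by ring
        _ = k * S + k * T := by rw [← hsplit]; ring
        _ ≤ k * S + (n - k) * (k * d (k - 1)) := by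
            have : k * T ≤ (n - k) * (k * d (k - 1)) := by
              calc k * T ≤ k * ((n - k) * d (k - 1)) := Nat.mul_le_mul_left _ hTk
                _ = (n - k) * (k * d (k - 1)) := by ring
            omega
        _ ≤ k * S + (n - k) * S := by
            have := Nat.mul_le_mul_left (n - k) hSk
            omega
        _ = (k + (n - k)) * S := by ring
        _ = n * S := by
            congr 1
            omega
    exact Nat.le_of_mul_le_mul_left key (by omega)
  · -- upper bound
    intro k hk1 hkn
    have hrhs : ∀ m, 3 ≤ m → ∑ i ∈ Finset.range m,
        (if i = 0 then n - 1 else if i < 3 then 2 else 1) = n + m := by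
      intro m hm
      induction m, hm using Nat.le_induction with
      | base =>
        rw [Finset.sum_range_succ, Finset.sum_range_succ, Finset.sum_range_one]
        simp
        omega
      | succ m hm ih =>
        rw [Finset.sum_range_succ, ih]
        have : ¬ m = 0 := by omega
        have : ¬ m < 3 := by omega
        simp [*]
        omega
    have hub : ∑ i ∈ Finset.range k, d i ≤ n + k := by
      have hsplit : ∑ i ∈ Finset.range k, d i + ∑ i ∈ Finset.Ico k n, d i
          = 2 * n := by
        rw [Finset.range_eq_Ico, Finset.sum_Ico_consecutive _ (Nat.zero_le k) hkn,
          ← Finset.range_eq_Ico, hsum]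
      have hT1 : n - k ≤ ∑ i ∈ Finset.Ico k n, d i := by
        have := Finset.card_nsmul_le_sum (Finset.Ico k n) d 1 ?_
        · simpa [smul_eq_mul, Nat.card_Ico] using this
        · intro i hi
          rw [Finset.mem_Ico] at hi
          exact hpos i hi.2
      omega
    match k, hk1 with
    | 1, _ => simpa using hd0
    | 2, _ =>
      have l1 : ∑ i ∈ Finset.range 2, d i = d 0 + d 1 := by
        simp [Finset.sum_range_succ]
      have l2 : (∑ i ∈ Finset.range 2,
          (if i = 0 then n - 1 else if i < 3 then 2 else 1)) = (n - 1) + 2 := by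
        simp [Finset.sum_range_succ]
      omega
    | (m+3), _ =>
      rw [hrhs (m+3) (by omega)]
      exact hub
end

section
/- Let G be a bicyclic graph (a connected simple graph on n ≥ 4 vertices with n+1 edges) with degree sequence d_1 ≥ d_2 ≥ ⋯ ≥ d_n. Then the vector (3, 3, 2, …, 2) (with n−2 trailing twos) is majorized by (d_1, …, d_n), and (d_1, …, d_n) is majorized by the vector (n−1, 3, 2, 2, 1, …, 1) (with n−4 trailing ones), where majorization means the corresponding partial-sum inequalities Σ_{i=1}^k y_i ≤ Σ_{i=1}^k x_i for k = 1, …, n−1 together with equal total sums 2(n+1). -/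
open Finset SimpleGraph

section Aux
variable {V : Type*} [Fintype V] [DecidableEq V] {G : SimpleGraph V} [DecidableRel G.Adj]

lemma bicyclic_aux_inc_subset (v : V) : G.incidenceFinset v ⊆ G.edgeFinset := by
  intro e he
  rw [SimpleGraph.mem_incidenceFinset] at he
  exact SimpleGraph.mem_edgeFinset.2 he.1

lemma bicyclic_aux_inter_card {u v : V} (h : u ≠ v) :
    (G.incidenceFinset u ∩ G.incidenceFinset v).card ≤ 1 := by
  have hs : G.incidenceFinset u ∩ G.incidenceFinset v ⊆ {s(u,v)} := by
    intro e he
    rw [Finset.mem_inter, SimpleGraph.mem_incidenceFinset,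
      SimpleGraph.mem_incidenceFinset] at he
    simpa using G.incidenceSet_inter_incidenceSet_subset h ⟨he.1, he.2⟩
  calc _ ≤ ({s(u,v)} : Finset (Sym2 V)).card := Finset.card_le_card hs
    _ = 1 := Finset.card_singleton _

lemma bicyclic_aux_pair {u v : V} (h : u ≠ v) :
    G.degree u + G.degree v ≤ G.edgeFinset.card + 1 := by
  rw [← G.card_incidenceFinset_eq_degree u, ← G.card_incidenceFinset_eq_degree v,
    ← Finset.card_union_add_card_inter]
  have h1 : (G.incidenceFinset u ∪ G.incidenceFinset v) ⊆ G.edgeFinset :=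
    Finset.union_subset (bicyclic_aux_inc_subset u) (bicyclic_aux_inc_subset v)
  exact Nat.add_le_add (Finset.card_le_card h1) (bicyclic_aux_inter_card h)

lemma bicyclic_aux_triple {u v w : V} (huv : u ≠ v) (huw : u ≠ w) (hvw : v ≠ w) :
    G.degree u + G.degree v + G.degree w ≤ G.edgeFinset.card + 3 := by
  rw [← G.card_incidenceFinset_eq_degree u, ← G.card_incidenceFinset_eq_degree v,
    ← G.card_incidenceFinset_eq_degree w]
  set A := G.incidenceFinset u
  set B := G.incidenceFinset v
  set C := G.incidenceFinset w
  have e1 : A.card + B.card = (A ∪ B).card + (A ∩ B).card :=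
    (Finset.card_union_add_card_inter A B).symm
  have e2 : (A ∪ B).card + C.card = (A ∪ B ∪ C).card + ((A ∪ B) ∩ C).card :=
    (Finset.card_union_add_card_inter _ C).symm
  have h3 : ((A ∪ B) ∩ C).card ≤ 2 := by
    rw [Finset.union_inter_distrib_right]
    calc ((A ∩ C) ∪ (B ∩ C)).card ≤ (A ∩ C).card + (B ∩ C).card :=
          Finset.card_union_le _ _
      _ ≤ 1 + 1 := Nat.add_le_add (bicyclic_aux_inter_card huw)
          (bicyclic_aux_inter_card hvw)
  have h4 : (A ∪ B ∪ C).card ≤ G.edgeFinset.card :=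
    Finset.card_le_card (Finset.union_subset
      (Finset.union_subset (bicyclic_aux_inc_subset u) (bicyclic_aux_inc_subset v))
      (bicyclic_aux_inc_subset w))
  have h5 : (A ∩ B).card ≤ 1 := bicyclic_aux_inter_card huv
  omega

omit [DecidableEq V] in
lemma bicyclic_aux_degree_pos (hconn : G.Connected) (h2 : 2 ≤ Fintype.card V) (v : V) :
    0 < G.degree v := by
  rw [SimpleGraph.degree_pos_iff_exists_adj]
  obtain ⟨u, hu⟩ := Fintype.exists_ne_of_one_lt_card h2 v
  obtain ⟨p⟩ := hconn.preconnected v u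
  cases p with
  | nil => exact absurd rfl hu.symm
  | cons h _ => exact ⟨_, h⟩

end Aux

lemma bicyclic_aux_lowsum (k : ℕ) (hk : 2 ≤ k) :
    ∑ i ∈ Finset.range k, (if i < 2 then 3 else 2) = 2 * k + 2 := by
  induction k with
  | zero => omega
  | succ k ih =>
    rcases Nat.lt_or_ge k 2 with h | h
    · have hk1 : k = 1 := by omega
      subst hk1; decide
    · rw [Finset.sum_range_succ, ih h, if_neg (by omega)]
      omega

lemma bicyclic_aux_upsum (n k : ℕ) (hn : 1 ≤ n) (hk : 4 ≤ k) :
    ∑ i ∈ Finset.range k,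
      (if i = 0 then n - 1 else if i = 1 then 3 else if i < 4 then 2 else 1)
    = n + k + 2 := by
  induction k with
  | zero => omega
  | succ k ih =>
    rcases Nat.lt_or_ge k 4 with h | h
    · have hk1 : k = 3 := by omega
      subst hk1
      rw [Finset.sum_range_succ, Finset.sum_range_succ, Finset.sum_range_succ,
        Finset.sum_range_succ, Finset.sum_range_zero]
      norm_num
      omega
    · rw [Finset.sum_range_succ, ih h, if_neg (by omega), if_neg (by omega),
        if_neg (by omega)]
      omega

set_option maxHeartbeats 1000000 in
/-- If `G` is a bicyclic graph on `n ≥ 4` vertices with nonincreasing degree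
sequence `d`, then `(3, 3, 2^{n-2}) ⊴ d ⊴ (n-1, 3, 2, 2, 1^{n-4})` in the sense
of partial sums together with equal total sums `2(n+1)`.  (0-indexed.) -/
theorem bicyclic_extremal_degree_sequences (n : ℕ) (hn : 4 ≤ n)
    (G : SimpleGraph (Fin n)) (hconn : G.Connected)
    (hedges : G.edgeSet.ncard = n + 1)
    (d : ℕ → ℕ) (hmono : ∀ i j, i ≤ j → j < n → d j ≤ d i)
    (hdeg : ∃ σ : Equiv.Perm (Fin n),
        ∀ i : Fin n, (G.neighborSet (σ i)).ncard = d (i : ℕ)) :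
    (∀ k, 1 ≤ k → k ≤ n - 1 →
      ∑ i ∈ Finset.range k, (if i < 2 then 3 else 2) ≤
        ∑ i ∈ Finset.range k, d i) ∧
    (∑ i ∈ Finset.range n, (if i < 2 then 3 else 2) = 2 * (n + 1)) ∧
    (∑ i ∈ Finset.range n, d i = 2 * (n + 1)) ∧
    (∀ k, 1 ≤ k → k ≤ n - 1 →
      ∑ i ∈ Finset.range k, d i ≤
        ∑ i ∈ Finset.range k,
          (if i = 0 then n - 1 else if i = 1 then 3 else if i < 4 then 2 else 1)) ∧
    (∑ i ∈ Finset.range n,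
        (if i = 0 then n - 1 else if i = 1 then 3 else if i < 4 then 2 else 1) =
      2 * (n + 1)) := by
  classical
  letI : DecidableRel G.Adj := Classical.decRel _
  obtain ⟨σ, hσ⟩ := hdeg
  -- degrees equal d
  have hd : ∀ i : Fin n, G.degree (σ i) = d (i : ℕ) := by
    intro i
    rw [← hσ i, ← SimpleGraph.card_neighborFinset_eq_degree,
      SimpleGraph.neighborFinset, Set.ncard_eq_toFinset_card']
  -- number of edges
  have hm : G.edgeFinset.card = n + 1 := by
    rw [SimpleGraph.edgeFinset, ← Set.ncard_eq_toFinset_card', hedges]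
  -- total degree sum
  have htot : ∑ i ∈ Finset.range n, d i = 2 * (n + 1) := by
    rw [← Fin.sum_univ_eq_sum_range]
    calc ∑ i : Fin n, d (i : ℕ) = ∑ i : Fin n, G.degree (σ i) := by
          exact Finset.sum_congr rfl fun i _ => (hd i).symm
      _ = ∑ v : Fin n, G.degree v := Fintype.sum_equiv σ _ _ fun i => rfl
      _ = 2 * G.edgeFinset.card := G.sum_degrees_eq_twice_card_edges
      _ = 2 * (n + 1) := by rw [hm]
  -- degrees positive
  have hcard : Fintype.card (Fin n) = n := Fintype.card_fin n
  have hpos : ∀ i, i < n → 1 ≤ d i := by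
    intro i hi
    have := bicyclic_aux_degree_pos hconn (by omega) (σ ⟨i, hi⟩)
    have h2 := hd ⟨i, hi⟩
    simp only [Fin.val_mk] at h2
    omega
  -- degrees at most n - 1
  have hlt : ∀ i, i < n → d i ≤ n - 1 := by
    intro i hi
    have := G.degree_lt_card_verts (σ ⟨i, hi⟩)
    have h2 := hd ⟨i, hi⟩
    simp only [Fin.val_mk] at h2
    omega
  -- distinct indices in Fin n
  have hne : ∀ i j : ℕ, ∀ hi : i < n, ∀ hj : j < n, i ≠ j →
      σ ⟨i, hi⟩ ≠ σ ⟨j, hj⟩ := by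
    intro i j hi hj hij
    exact fun h => hij (Fin.mk.injEq .. ▸ (σ.injective h : (⟨i, hi⟩ : Fin n) = ⟨j, hj⟩))
  have h0 : (0 : ℕ) < n := by omega
  have h1 : (1 : ℕ) < n := by omega
  have h2 : (2 : ℕ) < n := by omega
  have hd0 := hd ⟨0, h0⟩
  have hd1 := hd ⟨1, h1⟩
  have hd2 := hd ⟨2, h2⟩
  simp only [Fin.val_mk] at hd0 hd1 hd2
  -- pair and triple bounds
  have hpair : d 0 + d 1 ≤ n + 2 := by
    have := bicyclic_aux_pair (G := G) (hne 0 1 h0 h1 (by omega))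
    omega
  have htriple : d 0 + d 1 + d 2 ≤ n + 4 := by
    have := bicyclic_aux_triple (G := G) (hne 0 1 h0 h1 (by omega))
      (hne 0 2 h0 h2 (by omega)) (hne 1 2 h1 h2 (by omega))
    omega
  -- tail sum splitting
  have hsplit : ∀ k, k ≤ n →
      ∑ i ∈ Finset.range k, d i + ∑ i ∈ Finset.Ico k n, d i = 2 * (n + 1) := by
    intro k hk
    rw [Finset.sum_range_add_sum_Ico _ hk, htot]
  have htail_lo : ∀ k, k ≤ n → n - k ≤ ∑ i ∈ Finset.Ico k n, d i := by
    intro k hk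
    calc n - k = (Finset.Ico k n).card * 1 := by rw [Nat.card_Ico]; omega
      _ = (Finset.Ico k n).card • 1 := by rw [smul_eq_mul]
      _ ≤ ∑ i ∈ Finset.Ico k n, d i := Finset.card_nsmul_le_sum _ _ _ fun i hi =>
            hpos i (Finset.mem_Ico.mp hi).2
  refine ⟨?_, ?_, htot, ?_, ?_⟩
  · -- lower majorization
    intro k hk1 hk2
    rcases Nat.lt_or_ge k 2 with hk | hk
    · have : k = 1 := by omega
      subst this
      simp only [Finset.sum_range_one, if_pos (by norm_num : (0:ℕ) < 2)]
      -- d 0 ≥ 3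
      by_contra hcon
      push_neg at hcon
      have hle : ∀ i ∈ Finset.range n, d i ≤ 2 := by
        intro i hi
        have := hmono 0 i (Nat.zero_le i) (Finset.mem_range.mp hi)
        omega
      have hsum2 : ∑ i ∈ Finset.range n, d i ≤ n * 2 := by
        calc ∑ i ∈ Finset.range n, d i ≤ (Finset.range n).card • 2 :=
              Finset.sum_le_card_nsmul _ _ _ hle
          _ = n * 2 := by simp [mul_comm]
      omega
    · rw [bicyclic_aux_lowsum k hk]
      by_cases h3 : 3 ≤ d (k - 1)
      · have hge : ∀ i ∈ Finset.range k, 3 ≤ d i := by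
          intro i hi
          have hik := Finset.mem_range.mp hi
          have := hmono i (k - 1) (by omega) (by omega)
          omega
        have hsum3 : k * 3 ≤ ∑ i ∈ Finset.range k, d i := by
          calc k * 3 = (Finset.range k).card • 3 := by simp [mul_comm]
            _ ≤ ∑ i ∈ Finset.range k, d i := Finset.card_nsmul_le_sum _ _ _ hge
        omega
      · have hle : ∀ i ∈ Finset.Ico k n, d i ≤ 2 := by
          intro i hi
          have hi' := Finset.mem_Ico.mp hi
          have := hmono (k - 1) i (by omega) hi'.2
          omega
        have ht : ∑ i ∈ Finset.Ico k n, d i ≤ (n - k) * 2 := by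
          calc ∑ i ∈ Finset.Ico k n, d i ≤ (Finset.Ico k n).card • 2 :=
                Finset.sum_le_card_nsmul _ _ _ hle
            _ = (n - k) * 2 := by rw [Nat.card_Ico, smul_eq_mul]
        have hs := hsplit k (by omega)
        omega
  · rw [bicyclic_aux_lowsum n (by omega)]; ring
  · -- upper majorization
    intro k hk1 hk2
    rcases Nat.lt_or_ge k 4 with hk | hk
    · interval_cases k
      · simpa using hlt 0 (by omega)
      · rw [Finset.sum_range_succ, Finset.sum_range_succ, Finset.sum_range_zero,
          Finset.sum_range_succ, Finset.sum_range_succ, Finset.sum_range_zero]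
        norm_num
        omega
      · rw [Finset.sum_range_succ, Finset.sum_range_succ, Finset.sum_range_succ,
          Finset.sum_range_zero, Finset.sum_range_succ, Finset.sum_range_succ,
          Finset.sum_range_succ, Finset.sum_range_zero]
        norm_num
        omega
    · rw [bicyclic_aux_upsum n k (by omega) hk]
      have hs := hsplit k (by omega)
      have ht := htail_lo k (by omega)
      omega
  · rw [bicyclic_aux_upsum n n (by omega) hn]; ring
end

section
/- Let G be a tricyclic graph (a connected simple graph on n ≥ 5 vertices with n+2 edges) with degree sequence d_1 ≥ d_2 ≥ ⋯ ≥ d_n. Then the vector (3, 3, 3, 3, 2, …, 2) (with n−4 trailing twos) is majorized by (d_1, …, d_n); i.e. Σ_{i=1}^k min(3k, 2k+4)-type partial sums satisfy Σ_{i=1}^k d_i ≥ 3k for k ≤ 4 and Σ_{i=1}^k d_i ≥ 2k+4 for 4 ≤ k ≤ n, with Σ_{i=1}^n d_i = 2(n+2). -/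
/-- If `G` is a tricyclic graph on `n ≥ 5` vertices with nonincreasing degree
sequence `d`, then `(3, 3, 3, 3, 2^{n-4}) ⊴ d`; i.e. `∑_{i<k} d i ≥ 3k` for
`k ≤ 4`, `∑_{i<k} d i ≥ 2k + 4` for `4 ≤ k ≤ n`, and `∑_{i<n} d i = 2(n+2)`.
(0-indexed.) -/
theorem tricyclic_minimal_degree_sequence (n : ℕ) (hn : 5 ≤ n)
    (G : SimpleGraph (Fin n)) (hconn : G.Connected)
    (hedges : G.edgeSet.ncard = n + 2)
    (d : ℕ → ℕ) (hmono : ∀ i j, i ≤ j → j < n → d j ≤ d i)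
    (hdeg : ∃ σ : Equiv.Perm (Fin n),
        ∀ i : Fin n, (G.neighborSet (σ i)).ncard = d (i : ℕ)) :
    (∀ k, k ≤ 4 → 3 * k ≤ ∑ i ∈ Finset.range k, d i) ∧
    (∀ k, 4 ≤ k → k ≤ n → 2 * k + 4 ≤ ∑ i ∈ Finset.range k, d i) ∧
    ∑ i ∈ Finset.range n, d i = 2 * (n + 2) := by
  classical
  obtain ⟨σ, hσ⟩ := hdeg
  have hdegree : ∀ v : Fin n, (G.neighborSet v).ncard = G.degree v := by
    intro v
    rw [Set.ncard_eq_toFinset_card']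
    simp [SimpleGraph.neighborFinset_def, SimpleGraph.degree]
  have htotal : ∑ i ∈ Finset.range n, d i = 2 * (n + 2) := by
    have h1 : ∑ i ∈ Finset.range n, d i = ∑ i : Fin n, d i :=
      (Fin.sum_univ_eq_sum_range d n).symm
    have h2 : ∑ i : Fin n, d (i : ℕ) = ∑ i : Fin n, G.degree (σ i) :=
      Finset.sum_congr rfl fun i _ => by rw [← hσ i, hdegree]
    have h3 : ∑ i : Fin n, G.degree (σ i) = ∑ v : Fin n, G.degree v :=
      Equiv.sum_comp σ (fun v => G.degree v)
    have h4 : ∑ v : Fin n, G.degree v = 2 * G.edgeFinset.card :=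
      G.sum_degrees_eq_twice_card_edges
    have h5 : G.edgeFinset.card = n + 2 := by
      rw [← hedges, Set.ncard_eq_toFinset_card']
      simp only [← Set.ncard_coe_finset, SimpleGraph.coe_edgeFinset, Set.coe_toFinset]
    rw [h1, h2, h3, h4]
    omega
  have key : ∀ k, 1 ≤ k → k ≤ n →
      3 * k ≤ ∑ i ∈ Finset.range k, d i ∨ 2 * k + 4 ≤ ∑ i ∈ Finset.range k, d i := by
    intro k hk1 hkn
    by_cases h3 : 3 ≤ d (k - 1)
    · left
      have : (Finset.range k).card • 3 ≤ ∑ i ∈ Finset.range k, d i := by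
        refine Finset.card_nsmul_le_sum _ _ _ fun i hi => ?_
        have hik : i < k := Finset.mem_range.mp hi
        exact le_trans h3 (hmono i (k - 1) (by omega) (by omega))
      simpa [Nat.mul_comm] using this
    · right
      have hsplit : ∑ i ∈ Finset.range k, d i + ∑ i ∈ Finset.Ico k n, d i
          = ∑ i ∈ Finset.range n, d i := Finset.sum_range_add_sum_Ico d hkn
      have hico : ∑ i ∈ Finset.Ico k n, d i ≤ (n - k) * 2 := by
        have : ∑ i ∈ Finset.Ico k n, d i ≤ (Finset.Ico k n).card • 2 := by
          refine Finset.sum_le_card_nsmul _ _ _ fun i hi => ?_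
          obtain ⟨hki, hin⟩ := Finset.mem_Ico.mp hi
          exact le_trans (hmono (k - 1) i (by omega) hin) (by omega)
        simpa [Nat.card_Ico] using this
      omega
  refine ⟨?_, ?_, htotal⟩
  · intro k hk4
    rcases Nat.eq_zero_or_pos k with rfl | hk1
    · simp
    · rcases key k hk1 (by omega) with h | h <;> omega
  · intro k hk4 hkn
    rcases key k (by omega) hkn with h | h <;> omega
end
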